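/- arXiv:2408.02515 — 8 statements merged into one kernel-verified Lean document; each statement's English description precedes it below -/
import Mathlib

section
/- Let ω_c > 0, p > 1, and let S : [0,∞) → ℝ be Lebesgue integrable with S(ω) = ω^p · G(ω) on [0, ω_c), where G is twice differentiable on [0, ω_c), G'' is bounded on [0, ω_c), and G(0) ≠ 0, G'(0) ≠ 0. Define Γ(t) = ∫₀^∞ S(ω)(1 − cos(ωt))/ω² dω for t ≥ 0. Then the integral Γ_∞ := ∫₀^∞ S(ω)/ω² dω is finite and Γ(t) → Γ_∞ as t → ∞. Moreover, if S(ω) ≥ 0 for all ω ≥ 0, then Γ_∞ > 0. -/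
open MeasureTheory Real Filter Set

/-- Riemann–Lebesgue lemma for cosine: if `h` is integrable on `ℝ`, then
`∫ v, h v * cos (v * t)` tends to `0` as `t → ∞`. -/
lemma rl_cos (h : ℝ → ℝ) (hh : Integrable h) :
    Tendsto (fun t : ℝ => ∫ v, h v * Real.cos (v * t)) atTop (nhds 0) := by
  have hπ : (0:ℝ) < 2 * π := by positivity
  have hcomp : Tendsto (fun t : ℝ => t / (2 * π)) atTop (cocompact ℝ) :=
    (tendsto_id.atTop_div_const hπ).mono_right
      (by rw [cocompact_eq_atBot_atTop]; exact le_sup_right)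
  have H := (Real.tendsto_integral_exp_smul_cocompact (fun v => (h v : ℂ))).comp hcomp
  have H2 := (Complex.continuous_re.tendsto 0).comp H
  simp only [Complex.zero_re] at H2
  refine H2.congr fun t => ?_
  have hint : Integrable (fun v : ℝ =>
      Real.fourierChar (-(v * (t / (2 * π)))) • ((h v : ℂ))) :=
    by
      have := (Real.fourierIntegral_convergent_iff (μ := volume) (f := fun v => (h v : ℂ))
        (t / (2 * π))).2 hh.ofReal
      simpa [mul_comm] using this
  have key := Complex.reCLM.integral_comp_comm hint
  simp only [Complex.reCLM_apply] at key
  simp only [Function.comp_apply, ← key]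
  refine integral_congr_ae (Eventually.of_forall fun v => ?_)
  have hπ0 : π ≠ 0 := Real.pi_ne_zero
  have harg : 2 * π * (-(v * (t / (2 * π)))) = -(v * t) := by field_simp
  show (Real.fourierChar (-(v * (t / (2 * π)))) • ((h v : ℂ))).re = h v * Real.cos (v * t)
  rw [Circle.smul_def, smul_eq_mul, Real.fourierChar_apply, harg, Complex.mul_re,
    Complex.exp_ofReal_mul_I_re, Complex.exp_ofReal_mul_I_im]
  simp [Real.cos_neg, Real.sin_neg, mul_comm]

/-- **Trushechkin's theorem, case `p > 1`.**
If `S` is integrable on `[0,∞)` and factors as `S ω = ω^p G ω` on `[0, ω_c)` with `G` twice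
differentiable on `[0, ω_c)`, `G''` bounded there, and `G 0 ≠ 0`, `G' 0 ≠ 0`, then
`Γ_∞ = ∫₀^∞ S ω / ω² dω` is finite (the integrand is integrable), the decoherence exponent
`Γ t = ∫₀^∞ S ω (1 - cos (ω t)) / ω² dω` converges to `Γ_∞` as `t → ∞`, and if moreover
`S ≥ 0` then `Γ_∞ > 0`. -/
theorem trushechkin_case_p_gt_one
    (ωc p : ℝ) (hωc : 0 < ωc) (hp : 1 < p)
    (S G G' G'' : ℝ → ℝ)
    (hS_int : IntegrableOn S (Ici 0))
    (hfact : ∀ ω ∈ Ico 0 ωc, S ω = ω ^ p * G ω)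
    (hG' : ∀ ω ∈ Ico 0 ωc, HasDerivWithinAt G (G' ω) (Ico 0 ωc) ω)
    (hG'' : ∀ ω ∈ Ico 0 ωc, HasDerivWithinAt G' (G'' ω) (Ico 0 ωc) ω)
    (hG''bd : ∃ M : ℝ, ∀ ω ∈ Ico 0 ωc, |G'' ω| ≤ M)
    (hG0 : G 0 ≠ 0) (hG'0 : G' 0 ≠ 0) :
    IntegrableOn (fun ω => S ω / ω ^ 2) (Ioi 0) ∧
    Tendsto (fun t : ℝ => ∫ ω in Ioi (0:ℝ), S ω * (1 - Real.cos (ω * t)) / ω ^ 2)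
      atTop (nhds (∫ ω in Ioi (0:ℝ), S ω / ω ^ 2)) ∧
    ((∀ ω ≥ (0:ℝ), 0 ≤ S ω) → 0 < ∫ ω in Ioi (0:ℝ), S ω / ω ^ 2) := by
  set a : ℝ := ωc / 2 with ha_def
  have ha0 : 0 < a := by positivity
  have haωc : a < ωc := by linarith
  have hGcont : ContinuousOn G (Ico 0 ωc) := fun ω hω => (hG' ω hω).continuousWithinAt
  obtain ⟨C, hC⟩ : ∃ C, ∀ x ∈ Icc (0:ℝ) a, ‖G x‖ ≤ C :=
    isCompact_Icc.exists_bound_of_continuousOn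
      (hGcont.mono (fun x hx => ⟨hx.1, lt_of_le_of_lt hx.2 haωc⟩))
  have hmeas : ∀ s : Set ℝ, s ⊆ Ici 0 →
      AEStronglyMeasurable (fun ω => S ω / ω ^ 2) (volume.restrict s) := fun s hs =>
    (((hS_int.mono_set hs).aestronglyMeasurable.aemeasurable).div
      ((measurable_id.pow_const 2).aemeasurable)).aestronglyMeasurable
  have hint1 : IntegrableOn (fun ω => S ω / ω ^ 2) (Ioc 0 a) := by
    have hbd : IntegrableOn (fun ω : ℝ => C * ω ^ (p - 2)) (Ioc 0 a) :=
      (intervalIntegral.intervalIntegrable_rpow' (a := 0) (b := a)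
        (r := p - 2) (by linarith)).1.const_mul C
    refine Integrable.mono' hbd (hmeas _ (fun x hx => le_of_lt hx.1)) ?_
    rw [ae_restrict_iff' measurableSet_Ioc]
    refine Eventually.of_forall fun ω hω => ?_
    have hω0 : 0 < ω := hω.1
    rw [hfact ω ⟨hω0.le, lt_of_le_of_lt hω.2 haωc⟩]
    have heq : ω ^ p * G ω / ω ^ 2 = ω ^ (p - 2) * G ω := by
      rw [mul_div_right_comm, ← Real.rpow_natCast ω 2, ← Real.rpow_sub hω0]
      norm_num
    rw [heq, norm_mul, mul_comm C]
    have habs : ‖ω ^ (p - 2)‖ = ω ^ (p - 2) :=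
      abs_of_nonneg (Real.rpow_nonneg hω0.le _)
    rw [habs]
    exact mul_le_mul_of_nonneg_left (hC ω ⟨hω0.le, hω.2⟩) (Real.rpow_nonneg hω0.le _)
  have hint2 : IntegrableOn (fun ω => S ω / ω ^ 2) (Ici a) := by
    have hbd : IntegrableOn (fun ω : ℝ => |S ω| / a ^ 2) (Ici a) :=
      ((hS_int.mono_set (Ici_subset_Ici.2 ha0.le)).abs).div_const _
    refine Integrable.mono' hbd (hmeas _ (Ici_subset_Ici.2 ha0.le)) ?_
    rw [ae_restrict_iff' measurableSet_Ici]
    refine Eventually.of_forall fun ω hω => ?_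
    have hωa : a ≤ ω := hω
    have hω0 : 0 < ω := lt_of_lt_of_le ha0 hωa
    rw [Real.norm_eq_abs, abs_div, abs_of_nonneg (by positivity : (0:ℝ) ≤ ω ^ 2)]
    exact div_le_div_of_nonneg_left (abs_nonneg _) (by positivity)
      (pow_le_pow_left₀ ha0.le hωa 2)
  have hGamma : IntegrableOn (fun ω => S ω / ω ^ 2) (Ioi 0) := by
    refine IntegrableOn.mono_set (hint1.union hint2) ?_
    intro x hx
    rcases le_total x a with h | h
    · exact Or.inl ⟨hx, h⟩
    · exact Or.inr h
  refine ⟨hGamma, ?_, ?_⟩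
  · -- convergence
    have hcos_int : ∀ t : ℝ,
        IntegrableOn (fun ω => (S ω / ω ^ 2) * Real.cos (ω * t)) (Ioi 0) := by
      intro t
      refine Integrable.mono' hGamma.abs
        ((hmeas (Ioi 0) (fun x (hx : x ∈ Ioi 0) => (le_of_lt hx : (0:ℝ) ≤ x))).mul
          ((Real.continuous_cos.comp (continuous_id.mul continuous_const)).aestronglyMeasurable))
        ?_
      refine Eventually.of_forall fun ω => ?_
      rw [Real.norm_eq_abs, abs_mul]
      exact mul_le_of_le_one_right (abs_nonneg _) (Real.abs_cos_le_one _)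
    have hsplit : ∀ t : ℝ, (∫ ω in Ioi (0:ℝ), S ω * (1 - Real.cos (ω * t)) / ω ^ 2)
        = (∫ ω in Ioi (0:ℝ), S ω / ω ^ 2)
          - ∫ ω in Ioi (0:ℝ), (S ω / ω ^ 2) * Real.cos (ω * t) := by
      intro t
      rw [← integral_sub hGamma (hcos_int t)]
      refine integral_congr_ae (Eventually.of_forall fun ω => ?_)
      ring
    have hRL := rl_cos ((Ioi (0:ℝ)).indicator fun ω => S ω / ω ^ 2)
      ((integrable_indicator_iff measurableSet_Ioi).2 hGamma)
    have hRL' : Tendsto (fun t : ℝ => ∫ ω in Ioi (0:ℝ), (S ω / ω ^ 2) * Real.cos (ω * t))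
        atTop (nhds 0) := by
      refine hRL.congr fun t => ?_
      rw [← integral_indicator measurableSet_Ioi]
      refine integral_congr_ae (Eventually.of_forall fun v => ?_)
      exact (Set.indicator_mul_left (i := v) (Ioi (0:ℝ)) (fun ω => S ω / ω ^ 2)
        (fun ω => Real.cos (ω * t))).symm
    have hfinal := (tendsto_const_nhds (x := ∫ ω in Ioi (0:ℝ), S ω / ω ^ 2)
      (f := atTop)).sub hRL'
    rw [sub_zero] at hfinal
    exact hfinal.congr fun t => (hsplit t).symm
  · -- positivity
    intro hpos
    have hnonneg : ∀ᵐ ω ∂(volume.restrict (Ioi (0:ℝ))), 0 ≤ S ω / ω ^ 2 := by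
      rw [ae_restrict_iff' measurableSet_Ioi]
      exact Eventually.of_forall fun ω hω => div_nonneg (hpos ω (le_of_lt hω)) (by positivity)
    have hc : ContinuousWithinAt G (Ico 0 ωc) 0 := hGcont 0 ⟨le_rfl, hωc⟩
    have hG0pos : 0 < G 0 := by
      by_contra h
      push_neg at h
      have hlt : G 0 < 0 := lt_of_le_of_ne h hG0
      have hev : ∀ᶠ ω in nhdsWithin 0 (Ico 0 ωc), G ω < 0 := hc (Iio_mem_nhds hlt)
      have hne : (nhdsWithin (0:ℝ) (Ioo 0 ωc)).NeBot := by
        apply mem_closure_iff_nhdsWithin_neBot.1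
        rw [closure_Ioo (ne_of_lt hωc)]
        exact ⟨le_rfl, hωc.le⟩
      have hev2 : ∀ᶠ ω in nhdsWithin (0:ℝ) (Ioo 0 ωc), G ω < 0 :=
        nhdsWithin_mono 0 Ioo_subset_Ico_self hev
      obtain ⟨ω, hω1, hω2⟩ := (hev2.and eventually_mem_nhdsWithin).exists
      have hSω := hpos ω hω2.1.le
      rw [hfact ω ⟨hω2.1.le, hω2.2⟩] at hSω
      nlinarith [Real.rpow_pos_of_pos hω2.1 p]
    have hev : ∀ᶠ ω in nhdsWithin 0 (Ico 0 ωc), G 0 / 2 < G ω :=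
      hc (Ioi_mem_nhds (by linarith))
    rw [eventually_nhdsWithin_iff] at hev
    obtain ⟨δ, hδ0, hδ⟩ := Metric.eventually_nhds_iff.1 hev
    set ε : ℝ := min δ a with hε_def
    have hε0 : 0 < ε := lt_min hδ0 ha0
    have hεωc : ε < ωc := lt_of_le_of_lt (min_le_right _ _) haωc
    have hfpos : ∀ ω ∈ Ioo (0:ℝ) ε, 0 < S ω / ω ^ 2 := by
      intro ω hω
      have hω0 : 0 < ω := hω.1
      have hωc' : ω < ωc := lt_trans hω.2 hεωc
      have hGω : G 0 / 2 < G ω := by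
        refine hδ ?_ ⟨hω0.le, hωc'⟩
        rw [Real.dist_eq, sub_zero, abs_of_pos hω0]
        exact lt_of_lt_of_le hω.2 (min_le_left _ _)
      rw [hfact ω ⟨hω0.le, hωc'⟩]
      have : 0 < G ω := lt_trans (half_pos hG0pos) hGω
      positivity
    have h1 : 0 < ∫ ω in Ioo (0:ℝ) ε, S ω / ω ^ 2 := by
      rw [setIntegral_pos_iff_support_of_nonneg_ae ?_ (hGamma.mono_set Ioo_subset_Ioi_self)]
      · refine lt_of_lt_of_le ?_ (measure_mono
          (fun x hx => ⟨ne_of_gt (hfpos x hx), hx⟩ :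
            Ioo (0:ℝ) ε ⊆ Function.support (fun ω => S ω / ω ^ 2) ∩ Ioo 0 ε))
        rw [Real.volume_Ioo]
        simpa using hε0
      · exact ae_restrict_of_ae_restrict_of_subset Ioo_subset_Ioi_self hnonneg
    have h2 : (∫ ω in Ioo (0:ℝ) ε, S ω / ω ^ 2) ≤ ∫ ω in Ioi (0:ℝ), S ω / ω ^ 2 :=
      setIntegral_mono_set hGamma hnonneg (HasSubset.Subset.eventuallyLE Ioo_subset_Ioi_self)
    linarith
end

section
/- Let ω_c > 0 and let S : [0,∞) → ℝ be Lebesgue integrable with S(ω) = ω · G(ω) on [0, ω_c), where G is twice differentiable on [0, ω_c), G'' is bounded on [0, ω_c), and G(0) ≠ 0, G'(0) ≠ 0. Define Γ(t) = ∫₀^∞ S(ω)(1 − cos(ωt))/ω² dω for t ≥ 0. Then there exists a constant C₁ ∈ ℝ such that Γ(t) − G(0)·ln(t) → C₁ as t → ∞. Moreover, if S(ω) ≥ 0 for all ω ≥ 0, then G(0) > 0. -/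
open MeasureTheory Real Filter Set
open scoped FourierTransform Topology

lemma aux_one_sub_cos_le (x : ℝ) : 1 - Real.cos x ≤ x ^ 2 / 2 := by
  have h1 : Real.cos (x / 2) ^ 2 = 1 / 2 + Real.cos x / 2 := by
    have := Real.cos_sq (x / 2)
    rwa [(by ring : 2 * (x / 2) = x)] at this
  have h2 : Real.sin (x / 2) ^ 2 ≤ (x / 2) ^ 2 := Real.sin_sq_le_sq
  have h3 : Real.sin (x / 2) ^ 2 + Real.cos (x / 2) ^ 2 = 1 := Real.sin_sq_add_cos_sq _
  nlinarith

lemma aux_one_sub_cos_nonneg (x : ℝ) : 0 ≤ 1 - Real.cos x := by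
  have := Real.cos_le_one x; linarith

lemma aux_one_sub_cos_le_two (x : ℝ) : 1 - Real.cos x ≤ 2 := by
  have := Real.neg_one_le_cos x; linarith

lemma aux_RL_cos {f : ℝ → ℝ} (hf : Integrable f) :
    Tendsto (fun t : ℝ => ∫ v, f v * Real.cos (v * t)) atTop (𝓝 0) := by
  have hRL : Tendsto (fun w : ℝ => ∫ v : ℝ, 𝐞 (-(v * w)) • ((f v : ℂ)))
      (cocompact ℝ) (𝓝 0) := Real.tendsto_integral_exp_smul_cocompact _
  have hmap : Tendsto (fun t : ℝ => t / (2 * π)) atTop atTop := by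
    apply Tendsto.atTop_div_const (by positivity : (0:ℝ) < 2 * π) tendsto_id
  have hcc : Tendsto (fun t : ℝ => t / (2 * π)) atTop (cocompact ℝ) :=
    hmap.mono_right (by rw [cocompact_eq_atBot_atTop]; exact le_sup_right)
  have h2 : Tendsto (fun t : ℝ => ∫ v : ℝ, 𝐞 (-(v * (t / (2 * π)))) • ((f v : ℂ)))
      atTop (𝓝 0) := hRL.comp hcc
  have h3 := (Complex.continuous_re.tendsto 0).comp h2
  simp only [Function.comp_def, Complex.zero_re] at h3
  refine h3.congr fun t => ?_
  have hint : Integrable (fun v : ℝ => 𝐞 (-(v * (t / (2 * π)))) • ((f v : ℂ))) := by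
    apply Integrable.mono' (g := fun v => |f v|) hf.abs
    · apply AEStronglyMeasurable.smul
      · exact (Continuous.aestronglyMeasurable (by continuity))
      · exact (Complex.continuous_ofReal.comp_aestronglyMeasurable hf.aestronglyMeasurable)
    · filter_upwards with v
      rw [Circle.smul_def, smul_eq_mul, norm_mul]
      simp [Circle.norm_coe]
  rw [← RCLike.re_eq_complex_re, ← integral_re hint]
  congr 1; funext v
  rw [RCLike.re_eq_complex_re, Circle.smul_def, Real.fourierChar_apply]
  have h4 : (2 * π * -(v * (t / (2 * π)))) = -(v * t) := by
    field_simp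
  rw [h4, smul_eq_mul, Complex.mul_re]
  simp only [Complex.exp_ofReal_mul_I_re, Complex.exp_ofReal_mul_I_im, Complex.ofReal_re,
    Complex.ofReal_im, mul_zero, sub_zero, Real.cos_neg, Real.sin_neg]
  ring


lemma aux_g_integrableOn {x : ℝ} (hx : 0 ≤ x) :
    IntegrableOn (fun u : ℝ => (1 - Real.cos u) / u) (Ioc 0 x) := by
  apply Measure.integrableOn_of_bounded (M := x / 2) measure_Ioc_lt_top.ne
  · exact ((measurable_const.sub Real.measurable_cos).div measurable_id).aestronglyMeasurable
  · filter_upwards [ae_restrict_mem measurableSet_Ioc] with u hu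
    have hu0 : 0 < u := hu.1
    have hux : u ≤ x := hu.2
    have h1 : 0 ≤ 1 - Real.cos u := by have := Real.cos_le_one u; linarith
    rw [Real.norm_eq_abs, abs_div, abs_of_nonneg h1, abs_of_pos hu0, div_le_iff₀ hu0]
    have := aux_one_sub_cos_le u
    nlinarith

lemma aux_g_intervalIntegrable {x : ℝ} (hx : 0 ≤ x) :
    IntervalIntegrable (fun u : ℝ => (1 - Real.cos u) / u) volume 0 x := by
  rw [intervalIntegrable_iff, uIoc_of_le hx]
  exact aux_g_integrableOn hx

lemma aux_cosdiv_tendsto : ∃ L : ℝ,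
    Tendsto (fun x : ℝ => ∫ u in (1:ℝ)..x, Real.cos u / u) atTop (𝓝 L) := by
  have hsin_int : IntegrableOn (fun u : ℝ => Real.sin u * (u ^ 2)⁻¹) (Ioi 1) := by
    apply Integrable.mono' (g := fun u : ℝ => u ^ (-2 : ℝ))
    · exact integrableOn_Ioi_rpow_of_lt (by norm_num : (-2:ℝ) < -1) one_pos
    · exact ((Real.measurable_sin.mul (measurable_id.pow_const 2).inv)).aestronglyMeasurable
    · filter_upwards [ae_restrict_mem measurableSet_Ioi] with u hu
      have h1 : (0:ℝ) < u := lt_trans one_pos hu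
      rw [Real.norm_eq_abs, abs_mul, abs_inv, abs_of_pos (by positivity : (0:ℝ) < u ^ 2),
        Real.rpow_neg h1.le, (by push_cast; ring_nf : (2:ℝ) = ((2:ℕ):ℝ)), Real.rpow_natCast]
      calc |Real.sin u| * (u ^ 2)⁻¹ ≤ 1 * (u ^ 2)⁻¹ := by
            gcongr; exact Real.abs_sin_le_one u
        _ = (u ^ (2:ℕ))⁻¹ := one_mul _
  have htail : Tendsto (fun x : ℝ => ∫ u in (1:ℝ)..x, Real.sin u * (u ^ 2)⁻¹) atTop
      (𝓝 (∫ u in Ioi (1:ℝ), Real.sin u * (u ^ 2)⁻¹)) :=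
    intervalIntegral_tendsto_integral_Ioi 1 hsin_int tendsto_id
  have hsinx : Tendsto (fun x : ℝ => Real.sin x * x⁻¹) atTop (𝓝 0) := by
    refine squeeze_zero_norm' ?_ tendsto_inv_atTop_zero
    filter_upwards [eventually_ge_atTop (1:ℝ)] with x hx
    have hx0 : (0:ℝ) < x := lt_of_lt_of_le one_pos hx
    rw [Real.norm_eq_abs, abs_mul, abs_inv, abs_of_pos hx0]
    calc |Real.sin x| * x⁻¹ ≤ 1 * x⁻¹ := by gcongr; exact Real.abs_sin_le_one x
      _ = x⁻¹ := one_mul _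
  -- integration by parts identity
  have hibp : ∀ x : ℝ, 1 ≤ x → ∫ u in (1:ℝ)..x, Real.cos u / u
      = Real.sin x * x⁻¹ - Real.sin 1 * 1⁻¹ - ∫ u in (1:ℝ)..x, Real.sin u * (-(u ^ 2)⁻¹) := by
    intro x hx
    have huicc : ∀ y ∈ uIcc (1:ℝ) x, (0:ℝ) < y := by
      intro y hy
      rcases hy with ⟨h1, h2⟩
      have : min 1 x = 1 := min_eq_left hx
      rw [this] at h1
      linarith
    have key := intervalIntegral.integral_deriv_mul_eq_sub
      (u := Real.sin) (v := fun y : ℝ => y⁻¹)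
      (u' := Real.cos) (v' := fun y : ℝ => -(y ^ 2)⁻¹)
      (a := 1) (b := x)
      (fun y _ => Real.hasDerivAt_sin y)
      (fun y hy => hasDerivAt_inv (huicc y hy).ne')
      (Real.continuous_cos.intervalIntegrable 1 x)
      (ContinuousOn.intervalIntegrable
        (((continuousOn_pow 2).inv₀ (fun y hy => pow_ne_zero 2 (huicc y hy).ne')).neg))
    have hsplit : ∫ u in (1:ℝ)..x, (Real.cos u * u⁻¹ + Real.sin u * (-(u ^ 2)⁻¹))
          = (∫ u in (1:ℝ)..x, Real.cos u * u⁻¹) + ∫ u in (1:ℝ)..x, Real.sin u * (-(u ^ 2)⁻¹) := by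
        apply intervalIntegral.integral_add
        · apply ContinuousOn.intervalIntegrable
          exact ContinuousOn.mul (Real.continuous_cos.continuousOn)
            (continuousOn_inv₀.mono (fun y hy => (huicc y hy).ne'))
        · apply ContinuousOn.intervalIntegrable
          apply ContinuousOn.mul (Real.continuous_sin.continuousOn)
          exact ((continuousOn_pow 2).inv₀ (fun y hy => pow_ne_zero 2 (huicc y hy).ne')).neg
    rw [hsplit] at key
    have : ∫ u in (1:ℝ)..x, Real.cos u / u = ∫ u in (1:ℝ)..x, Real.cos u * u⁻¹ := by
      simp_rw [div_eq_mul_inv]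
    rw [this]
    linarith [key]
  refine ⟨0 - Real.sin 1 * 1⁻¹ + ∫ u in Ioi (1:ℝ), Real.sin u * (u ^ 2)⁻¹, ?_⟩
  have hneg : Tendsto (fun x : ℝ => Real.sin x * x⁻¹ - Real.sin 1 * 1⁻¹
      - ∫ u in (1:ℝ)..x, Real.sin u * (-(u ^ 2)⁻¹)) atTop
      (𝓝 (0 - Real.sin 1 * 1⁻¹ + ∫ u in Ioi (1:ℝ), Real.sin u * (u ^ 2)⁻¹)) := by
    have h1 : Tendsto (fun x : ℝ => ∫ u in (1:ℝ)..x, Real.sin u * (-(u ^ 2)⁻¹)) atTop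
        (𝓝 (-∫ u in Ioi (1:ℝ), Real.sin u * (u ^ 2)⁻¹)) := by
      have : ∀ x : ℝ, (∫ u in (1:ℝ)..x, Real.sin u * (-(u ^ 2)⁻¹))
          = -(∫ u in (1:ℝ)..x, Real.sin u * (u ^ 2)⁻¹) := by
        intro x
        rw [← intervalIntegral.integral_neg]
        congr 1; funext u; ring
      simp_rw [this]
      exact htail.neg
    have := ((hsinx.sub (tendsto_const_nhds (x := Real.sin 1 * 1⁻¹))).sub h1)
    convert this using 2
    ring
  exact hneg.congr' (by filter_upwards [eventually_ge_atTop (1:ℝ)] with x hx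
    using (hibp x hx).symm)

lemma aux_Phi_tendsto : ∃ c : ℝ, Tendsto
    (fun x : ℝ => (∫ u in (0:ℝ)..x, (1 - Real.cos u) / u) - Real.log x) atTop (𝓝 c) := by
  obtain ⟨L, hL⟩ := aux_cosdiv_tendsto
  refine ⟨(∫ u in (0:ℝ)..1, (1 - Real.cos u) / u) - L, ?_⟩
  have h : Tendsto (fun x : ℝ => (∫ u in (0:ℝ)..1, (1 - Real.cos u) / u)
      - ∫ u in (1:ℝ)..x, Real.cos u / u) atTop
      (𝓝 ((∫ u in (0:ℝ)..1, (1 - Real.cos u) / u) - L)) := tendsto_const_nhds.sub hL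
  apply h.congr'
  filter_upwards [eventually_ge_atTop (1:ℝ)] with x hx
  have hx0 : (0:ℝ) < x := lt_of_lt_of_le one_pos hx
  have huicc : ∀ y ∈ uIcc (1:ℝ) x, (0:ℝ) < y := by
    intro y hy
    have h1 := hy.1
    rw [min_eq_left hx] at h1
    linarith
  have hI2 : IntervalIntegrable (fun u : ℝ => (1 - Real.cos u) / u) volume 1 x := by
    apply ContinuousOn.intervalIntegrable
    exact ContinuousOn.div (by fun_prop) continuousOn_id (fun y hy => (huicc y hy).ne')
  have hadd := intervalIntegral.integral_add_adjacent_intervals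
    (aux_g_intervalIntegrable zero_le_one) hI2
  have hInv : IntervalIntegrable (fun u : ℝ => 1 / u) volume 1 x := by
    apply ContinuousOn.intervalIntegrable
    exact ContinuousOn.div continuousOn_const continuousOn_id (fun y hy => (huicc y hy).ne')
  have hCos : IntervalIntegrable (fun u : ℝ => Real.cos u / u) volume 1 x := by
    apply ContinuousOn.intervalIntegrable
    exact ContinuousOn.div (by fun_prop) continuousOn_id (fun y hy => (huicc y hy).ne')
  have hsub : (∫ u in (1:ℝ)..x, (1 - Real.cos u) / u)
      = (∫ u in (1:ℝ)..x, 1 / u) - ∫ u in (1:ℝ)..x, Real.cos u / u := by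
    rw [← intervalIntegral.integral_sub hInv hCos]
    congr 1
    funext u
    rw [sub_div]
  have hlog : (∫ u in (1:ℝ)..x, 1 / u) = Real.log x := by
    rw [integral_one_div, div_one]
    intro h
    exact absurd h (by intro hh; exact (huicc 0 hh).false)
  linarith [hadd, hsub, hlog]

lemma aux_cov {c t : ℝ} (hc : 0 < c) (ht : 0 < t) :
    ∫ ω in Ioo (0:ℝ) c, (1 - Real.cos (ω * t)) / ω
      = ∫ u in (0:ℝ)..(c * t), (1 - Real.cos u) / u := by
  have h1 : ∫ ω in Ioo (0:ℝ) c, (1 - Real.cos (ω * t)) / ω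
      = ∫ ω in (0:ℝ)..c, (1 - Real.cos (ω * t)) / ω := by
    rw [intervalIntegral.integral_of_le hc.le, integral_Ioc_eq_integral_Ioo]
  rw [h1]
  have hpt : ∀ ω : ℝ, (1 - Real.cos (ω * t)) / ω
      = t * ((1 - Real.cos (ω * t)) / (ω * t)) := by
    intro ω
    rcases eq_or_ne ω 0 with h | h
    · simp [h]
    · field_simp
  simp_rw [hpt]
  rw [intervalIntegral.integral_const_mul,
    intervalIntegral.integral_comp_mul_right (fun u => (1 - Real.cos u) / u) ht.ne']
  rw [zero_mul]
  simp only [smul_eq_mul]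
  rw [← mul_assoc, mul_inv_cancel₀ ht.ne', one_mul]


set_option maxHeartbeats 1000000 in
/-- **Trushechkin's theorem, case `p = 1`.**
If `S` is integrable on `[0,∞)` and factors as `S ω = ω · G ω` on `[0, ω_c)` with `G` twice
differentiable on `[0, ω_c)`, `G''` bounded there, and `G 0 ≠ 0`, `G' 0 ≠ 0`, then there is a
constant `C₁` such that `Γ t - G 0 · ln t → C₁` as `t → ∞`, where
`Γ t = ∫₀^∞ S ω (1 - cos (ω t)) / ω² dω`; moreover if `S ≥ 0` then `G 0 > 0`. -/
theorem trushechkin_case_p_eq_one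
    (ωc : ℝ) (hωc : 0 < ωc)
    (S G G' G'' : ℝ → ℝ)
    (hS_int : IntegrableOn S (Ici 0))
    (hfact : ∀ ω ∈ Ico 0 ωc, S ω = ω * G ω)
    (hG' : ∀ ω ∈ Ico 0 ωc, HasDerivWithinAt G (G' ω) (Ico 0 ωc) ω)
    (hG'' : ∀ ω ∈ Ico 0 ωc, HasDerivWithinAt G' (G'' ω) (Ico 0 ωc) ω)
    (hG''bd : ∃ M : ℝ, ∀ ω ∈ Ico 0 ωc, |G'' ω| ≤ M)
    (hG0 : G 0 ≠ 0) (hG'0 : G' 0 ≠ 0) :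
    (∃ C₁ : ℝ,
      Tendsto (fun t : ℝ =>
          (∫ ω in Ioi (0:ℝ), S ω * (1 - Real.cos (ω * t)) / ω ^ 2) - G 0 * Real.log t)
        atTop (nhds C₁)) ∧
    ((∀ ω ≥ (0:ℝ), 0 ≤ S ω) → 0 < G 0) := by
  have h0mem : (0:ℝ) ∈ Ico 0 ωc := ⟨le_refl 0, hωc⟩
  -- bounds
  obtain ⟨M₀, hM₀⟩ := hG''bd
  set M : ℝ := max M₀ 0 with hMdef
  have hMnn : 0 ≤ M := le_max_right _ _
  have hM : ∀ ω ∈ Ico 0 ωc, |G'' ω| ≤ M := fun ω hω => (hM₀ ω hω).trans (le_max_left _ _)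
  set K' : ℝ := |G' 0| + M * ωc with hK'def
  have hK'nn : 0 ≤ K' := by positivity
  have hG'bd : ∀ ω ∈ Ico 0 ωc, |G' ω| ≤ K' := by
    intro ω hω
    have key := Convex.norm_image_sub_le_of_norm_hasDerivWithin_le hG''
      (fun x hx => by rw [Real.norm_eq_abs]; exact hM x hx) (convex_Ico 0 ωc) h0mem hω
    rw [Real.norm_eq_abs, sub_zero, Real.norm_eq_abs, abs_of_nonneg hω.1] at key
    have h1 : M * ω ≤ M * ωc := by
      apply mul_le_mul_of_nonneg_left hω.2.le hMnn
    calc |G' ω| = |G' 0 + (G' ω - G' 0)| := by ring_nf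
      _ ≤ |G' 0| + |G' ω - G' 0| := abs_add_le _ _
      _ ≤ |G' 0| + M * ωc := by linarith
  have hGlip : ∀ ω ∈ Ico 0 ωc, |G ω - G 0| ≤ K' * ω := by
    intro ω hω
    have key := Convex.norm_image_sub_le_of_norm_hasDerivWithin_le hG'
      (fun x hx => by rw [Real.norm_eq_abs]; exact hG'bd x hx) (convex_Ico 0 ωc) h0mem hω
    rwa [Real.norm_eq_abs, sub_zero, Real.norm_eq_abs, abs_of_nonneg hω.1] at key
  set K : ℝ := |G 0| + K' * ωc with hKdef
  have hGbd : ∀ ω ∈ Ico 0 ωc, |G ω| ≤ K := by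
    intro ω hω
    have h1 := hGlip ω hω
    have h2 : K' * ω ≤ K' * ωc := mul_le_mul_of_nonneg_left hω.2.le hK'nn
    calc |G ω| = |G 0 + (G ω - G 0)| := by ring_nf
      _ ≤ |G 0| + |G ω - G 0| := abs_add_le _ _
      _ ≤ |G 0| + K' * ωc := by linarith
  -- H
  set H : ℝ → ℝ := fun ω => (G ω - G 0) / ω with hHdef
  have hHbd : ∀ ω ∈ Ioo 0 ωc, |H ω| ≤ K' := by
    intro ω hω
    have h1 := hGlip ω ⟨hω.1.le, hω.2⟩
    show |(G ω - G 0) / ω| ≤ K'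
    rw [abs_div, abs_of_pos hω.1, div_le_iff₀ hω.1]
    linarith
  have hGcont : ContinuousOn G (Ico 0 ωc) := fun x hx => (hG' x hx).continuousWithinAt
  have hHcont : ContinuousOn H (Ioo 0 ωc) := by
    apply ContinuousOn.div
    · exact ((hGcont.mono Ioo_subset_Ico_self).sub continuousOn_const)
    · exact continuousOn_id
    · exact fun y hy => hy.1.ne'
  have hHint : IntegrableOn H (Ioo 0 ωc) := by
    refine ⟨hHcont.aestronglyMeasurable measurableSet_Ioo, ?_⟩
    apply HasFiniteIntegral.restrict_of_bounded (C := K') measure_Ioo_lt_top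
    filter_upwards [ae_restrict_mem measurableSet_Ioo] with ω hω
    rw [Real.norm_eq_abs]; exact hHbd ω hω
  constructor
  · -- main limit
    obtain ⟨c, hc⟩ := aux_Phi_tendsto
    have hSfar : IntegrableOn S (Ici ωc) := hS_int.mono_set (Ici_subset_Ici.mpr hωc.le)
    have hfar0_int : IntegrableOn (fun ω => S ω / ω ^ 2) (Ici ωc) := by
      apply Integrable.mono' (hSfar.abs.mul_const ((ωc ^ 2)⁻¹))
      · have h2 : AEStronglyMeasurable (fun ω : ℝ => (ω ^ 2)⁻¹) (volume.restrict (Ici ωc)) :=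
          ((measurable_id.pow_const 2).inv).aestronglyMeasurable
        have h3 := hSfar.aestronglyMeasurable.mul h2
        simpa [div_eq_mul_inv, Pi.mul_def] using h3
      · filter_upwards [ae_restrict_mem measurableSet_Ici] with ω hω
        have hω0 : (0:ℝ) < ω := lt_of_lt_of_le hωc hω
        rw [Real.norm_eq_abs, abs_div, abs_of_pos (by positivity : (0:ℝ) < ω ^ 2),
          div_eq_mul_inv]
        gcongr
        exact hω
    have hfarcos_int : ∀ t : ℝ, IntegrableOn
        (fun ω => S ω / ω ^ 2 * Real.cos (ω * t)) (Ici ωc) := by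
      intro t
      apply Integrable.mono' hfar0_int.abs
      · exact hfar0_int.aestronglyMeasurable.mul
          (Continuous.aestronglyMeasurable (by fun_prop))
      · filter_upwards with ω
        rw [Real.norm_eq_abs, abs_mul]
        calc |S ω / ω ^ 2| * |Real.cos (ω * t)| ≤ |S ω / ω ^ 2| * 1 := by
              gcongr; exact Real.abs_cos_le_one _
          _ = |S ω / ω ^ 2| := mul_one _
    have hfar_ptws : ∀ t : ℝ, (fun ω : ℝ => S ω * (1 - Real.cos (ω * t)) / ω ^ 2)
        = fun ω => S ω / ω ^ 2 - S ω / ω ^ 2 * Real.cos (ω * t) := by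
      intro t; funext ω; ring
    have hfarfull_int : ∀ t : ℝ, IntegrableOn
        (fun ω => S ω * (1 - Real.cos (ω * t)) / ω ^ 2) (Ici ωc) := by
      intro t
      rw [hfar_ptws t]
      exact hfar0_int.sub (hfarcos_int t)
    have hfar_eq : ∀ t : ℝ, (∫ ω in Ici ωc, S ω * (1 - Real.cos (ω * t)) / ω ^ 2)
        = (∫ ω in Ici ωc, S ω / ω ^ 2)
          - ∫ ω in Ici ωc, S ω / ω ^ 2 * Real.cos (ω * t) := by
      intro t
      rw [← integral_sub hfar0_int (hfarcos_int t), hfar_ptws t]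
    have hRLfar : Tendsto (fun t : ℝ => ∫ ω in Ici ωc, S ω / ω ^ 2 * Real.cos (ω * t))
        atTop (𝓝 0) := by
      have hind : Integrable ((Ici ωc).indicator fun ω => S ω / ω ^ 2) :=
        hfar0_int.integrable_indicator measurableSet_Ici
      refine (aux_RL_cos hind).congr fun t => ?_
      rw [← integral_indicator measurableSet_Ici]
      congr 1
      funext ω
      by_cases hω : ω ∈ Ici ωc
      · simp [indicator_of_mem hω]
      · simp [indicator_of_notMem hω]
    have hfarlim : Tendsto (fun t : ℝ => ∫ ω in Ici ωc, S ω * (1 - Real.cos (ω * t)) / ω ^ 2)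
        atTop (𝓝 (∫ ω in Ici ωc, S ω / ω ^ 2)) := by
      have h := (tendsto_const_nhds (x := ∫ ω in Ici ωc, S ω / ω ^ 2)).sub hRLfar
      rw [sub_zero] at h
      exact h.congr fun t => (hfar_eq t).symm
    -- near part
    have hnearcos_int : ∀ t : ℝ, IntegrableOn (fun ω => H ω * Real.cos (ω * t)) (Ioo 0 ωc) := by
      intro t
      apply Integrable.mono' hHint.abs
      · exact hHint.aestronglyMeasurable.mul (Continuous.aestronglyMeasurable (by fun_prop))
      · filter_upwards with ω
        rw [Real.norm_eq_abs, abs_mul]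
        calc |H ω| * |Real.cos (ω * t)| ≤ |H ω| * 1 := by
              gcongr; exact Real.abs_cos_le_one _
          _ = |H ω| := mul_one _
    have hRLnear : Tendsto (fun t : ℝ => ∫ ω in Ioo 0 ωc, H ω * Real.cos (ω * t))
        atTop (𝓝 0) := by
      have hind : Integrable ((Ioo (0:ℝ) ωc).indicator H) :=
        hHint.integrable_indicator measurableSet_Ioo
      refine (aux_RL_cos hind).congr fun t => ?_
      rw [← integral_indicator measurableSet_Ioo]
      congr 1
      funext ω
      by_cases hω : ω ∈ Ioo (0:ℝ) ωc
      · simp [indicator_of_mem hω]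
      · simp [indicator_of_notMem hω]
    have hf1_int : ∀ t : ℝ, IntegrableOn (fun ω => H ω * (1 - Real.cos (ω * t))) (Ioo 0 ωc) := by
      intro t
      have hpt : (fun ω : ℝ => H ω * (1 - Real.cos (ω * t)))
          = fun ω => H ω - H ω * Real.cos (ω * t) := by funext ω; ring
      rw [hpt]
      exact hHint.sub (hnearcos_int t)
    have hf2_int : ∀ t : ℝ, IntegrableOn (fun ω : ℝ => (1 - Real.cos (ω * t)) / ω) (Ioo 0 ωc) := by
      intro t
      refine ⟨((measurable_const.sub (Real.measurable_cos.comp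
        (measurable_id.mul_const t))).div measurable_id).aestronglyMeasurable, ?_⟩
      apply HasFiniteIntegral.restrict_of_bounded (C := ωc * t ^ 2 / 2) measure_Ioo_lt_top
      filter_upwards [ae_restrict_mem measurableSet_Ioo] with ω hω
      have h1 : 0 ≤ 1 - Real.cos (ω * t) := by have := Real.cos_le_one (ω * t); linarith
      rw [Real.norm_eq_abs, abs_div, abs_of_nonneg h1, abs_of_pos hω.1, div_le_iff₀ hω.1]
      have h2 := aux_one_sub_cos_le (ω * t)
      have h3 : (ω * t) ^ 2 / 2 ≤ ωc * t ^ 2 / 2 * ω := by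
        have hωle := hω.2.le
        have hω0 := hω.1.le
        have h4 : ω * ω ≤ ωc * ω := mul_le_mul_of_nonneg_right hωle hω0
        nlinarith [mul_nonneg (sub_nonneg.mpr h4) (sq_nonneg t)]
      linarith
    have heq : ∀ t : ℝ, EqOn
        (fun ω : ℝ => H ω * (1 - Real.cos (ω * t)) + G 0 * ((1 - Real.cos (ω * t)) / ω))
        (fun ω : ℝ => S ω * (1 - Real.cos (ω * t)) / ω ^ 2) (Ioo 0 ωc) := by
      intro t ω hω
      have hS : S ω = ω * G ω := hfact ω ⟨hω.1.le, hω.2⟩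
      simp only [hHdef]
      rw [hS]
      have hne : ω ≠ 0 := hω.1.ne'
      field_simp
      ring
    have hg_int : ∀ t : ℝ, IntegrableOn
        (fun ω => S ω * (1 - Real.cos (ω * t)) / ω ^ 2) (Ioo 0 ωc) := by
      intro t
      exact IntegrableOn.congr_fun ((hf1_int t).add ((hf2_int t).const_mul (G 0)))
        (heq t) measurableSet_Ioo
    have hsplit : ∀ t : ℝ, (∫ ω in Ioi (0:ℝ), S ω * (1 - Real.cos (ω * t)) / ω ^ 2)
        = (∫ ω in Ioo (0:ℝ) ωc, S ω * (1 - Real.cos (ω * t)) / ω ^ 2)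
          + ∫ ω in Ici ωc, S ω * (1 - Real.cos (ω * t)) / ω ^ 2 := by
      intro t
      rw [← Set.Ioo_union_Ici_eq_Ioi hωc]
      exact setIntegral_union (disjoint_left.mpr fun x hx hx' => absurd hx.2 (not_lt.mpr hx'))
        measurableSet_Ici (hg_int t) (hfarfull_int t)
    have hnear_eq : ∀ t : ℝ, (∫ ω in Ioo (0:ℝ) ωc, S ω * (1 - Real.cos (ω * t)) / ω ^ 2)
        = ((∫ ω in Ioo (0:ℝ) ωc, H ω) - ∫ ω in Ioo (0:ℝ) ωc, H ω * Real.cos (ω * t))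
          + G 0 * ∫ ω in Ioo (0:ℝ) ωc, (1 - Real.cos (ω * t)) / ω := by
      intro t
      rw [← setIntegral_congr_fun measurableSet_Ioo (heq t)]
      rw [integral_add (hf1_int t) ((hf2_int t).const_mul (G 0)), integral_const_mul]
      congr 1
      rw [← integral_sub hHint (hnearcos_int t)]
      congr 1
      funext ω
      ring
    have hω_t : Tendsto (fun t : ℝ => ωc * t) atTop atTop :=
      Tendsto.const_mul_atTop hωc tendsto_id
    have hphi : Tendsto (fun t : ℝ =>
        (∫ ω in Ioo (0:ℝ) ωc, (1 - Real.cos (ω * t)) / ω) - Real.log t)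
        atTop (𝓝 (c + Real.log ωc)) := by
      have h1 : Tendsto (fun t : ℝ =>
          ((∫ u in (0:ℝ)..(ωc * t), (1 - Real.cos u) / u) - Real.log (ωc * t)) + Real.log ωc)
          atTop (𝓝 (c + Real.log ωc)) := by
        have := hc.comp hω_t
        exact this.add_const _
      apply h1.congr'
      filter_upwards [eventually_gt_atTop (0:ℝ)] with t ht
      rw [aux_cov hωc ht, Real.log_mul hωc.ne' ht.ne']
      ring
    refine ⟨(∫ ω in Ici ωc, S ω / ω ^ 2)
      + (((∫ ω in Ioo (0:ℝ) ωc, H ω) - 0) + G 0 * (c + Real.log ωc)), ?_⟩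
    have hcomb := hfarlim.add
      (((tendsto_const_nhds (x := ∫ ω in Ioo (0:ℝ) ωc, H ω)).sub hRLnear).add
        (hphi.const_mul (G 0)))
    apply hcomb.congr'
    filter_upwards [eventually_gt_atTop (0:ℝ)] with t ht
    rw [hsplit t, hnear_eq t]
    ring
  · -- positivity part
    intro hSpos
    have hGpos : ∀ ω ∈ Ioo 0 ωc, 0 ≤ G ω := by
      intro ω hω
      have h1 : G ω = S ω / ω := by
        rw [hfact ω ⟨hω.1.le, hω.2⟩, mul_comm, mul_div_assoc, div_self hω.1.ne', mul_one]
      rw [h1]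
      exact div_nonneg (hSpos ω hω.1.le) hω.1.le
    have hne : (𝓝[Ioo (0:ℝ) ωc] 0).NeBot := by
      rw [← mem_closure_iff_nhdsWithin_neBot, closure_Ioo hωc.ne]
      exact ⟨le_refl 0, hωc.le⟩
    have hcont0 : Tendsto G (𝓝[Ioo (0:ℝ) ωc] 0) (𝓝 (G 0)) :=
      ((hG' 0 h0mem).continuousWithinAt).mono Ioo_subset_Ico_self
    have hev : ∀ᶠ ω in 𝓝[Ioo (0:ℝ) ωc] 0, 0 ≤ G ω := by
      filter_upwards [eventually_mem_nhdsWithin] with ω hω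
      exact hGpos ω hω
    have h0le : 0 ≤ G 0 := ge_of_tendsto hcont0 hev
    exact lt_of_le_of_ne h0le (Ne.symm hG0)
end

section
/- For every real x ≥ 0, the sequence L_n(x/n) converges as n → ∞ to (1/(2π)) ∫_{−π}^{π} cos(2√x · sin θ) dθ, i.e. lim_{n→∞} L_n(x/n) = J₀(2√x), where J₀ is the Bessel function of the first kind of order zero given by the stated integral. -/
open Filter Real

open Finset intervalIntegral MeasureTheory

lemma prod_ratio (m : ℕ) :
    ∏ i ∈ Finset.range m, (2*(i:ℝ)+1)/(2*i+2) = (Nat.factorial (2*m)) / (4^m * (Nat.factorial m)^2) := by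
  induction m with
  | zero => simp
  | succ k ih =>
    rw [Finset.prod_range_succ, ih]
    have h1 : (Nat.factorial (2*(k+1)) : ℝ) = (2*k+2) * ((2*k+1) * Nat.factorial (2*k)) := by
      have : 2*(k+1) = (2*k+1) + 1 := by ring
      rw [this, Nat.factorial_succ, Nat.factorial_succ]; push_cast; ring
    have h2 : (Nat.factorial (k+1) : ℝ) = (k+1) * Nat.factorial k := by
      rw [Nat.factorial_succ]; push_cast; ring
    have hf : (Nat.factorial k : ℝ) ≠ 0 := Nat.cast_ne_zero.2 (Nat.factorial_ne_zero k)
    rw [h1, h2]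
    field_simp
    ring

lemma sin_pow_integral (m : ℕ) :
    ∫ θ in (-π)..π, Real.sin θ ^ (2*m) = 2 * (π * ∏ i ∈ Finset.range m, (2*(i:ℝ)+1)/(2*i+2)) := by
  have hsplit : ∫ θ in (-π)..π, Real.sin θ ^ (2*m)
      = (∫ θ in (-π)..(0:ℝ), Real.sin θ ^ (2*m)) + ∫ θ in (0:ℝ)..π, Real.sin θ ^ (2*m) := by
    rw [intervalIntegral.integral_add_adjacent_intervals] <;>
      exact (Continuous.intervalIntegrable (by continuity) _ _)
  have hneg : (∫ θ in (-π)..(0:ℝ), Real.sin θ ^ (2*m)) = ∫ θ in (0:ℝ)..π, Real.sin θ ^ (2*m) := by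
    have := intervalIntegral.integral_comp_neg (a := 0) (b := π) (fun θ => Real.sin θ ^ (2*m))
    simp only [Real.sin_neg, neg_zero] at this ⊢
    rw [← this]
    congr 1; funext θ; rw [neg_pow]; norm_num [pow_mul]
  rw [hsplit, hneg, integral_sin_pow_even]; ring

lemma besselJ0_series (a : ℝ) :
    (1/(2*π)) * ∫ θ in (-π)..π, Real.cos (a * Real.sin θ)
      = ∑' m : ℕ, (-1)^m * (a^2/4)^m / (Nat.factorial m : ℝ)^2 := by
  have hpi : -π ≤ π := by linarith [pi_pos]
  set F : ℕ → ℝ → ℝ := fun m θ => (-1)^m * (a * Real.sin θ)^(2*m) / (Nat.factorial (2*m) : ℝ)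
  have hFcont : ∀ m, Continuous (F m) := fun m => by continuity
  have hFint : ∀ m, IntegrableOn (F m) (Set.Ioc (-π) π) := fun m =>
    (hFcont m).integrableOn_Ioc
  have hbound : ∀ m θ, ‖F m θ‖ ≤ |a|^(2*m) / (Nat.factorial (2*m) : ℝ) := by
    intro m θ
    have h1 : |a * Real.sin θ| ^ (2*m) ≤ |a| ^ (2*m) := by
      apply pow_le_pow_left₀ (abs_nonneg _)
      rw [abs_mul]
      calc |a| * |Real.sin θ| ≤ |a| * 1 := by
            exact mul_le_mul_of_nonneg_left (Real.abs_sin_le_one θ) (abs_nonneg a)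
        _ = |a| := mul_one _
    have hf : (0:ℝ) < (Nat.factorial (2*m) : ℝ) := Nat.cast_pos.2 (Nat.factorial_pos _)
    rw [Real.norm_eq_abs, abs_div, abs_mul, abs_pow, abs_neg, abs_one, one_pow, one_mul,
      abs_pow, abs_of_pos hf]
    exact div_le_div_of_nonneg_right h1 hf.le
  have hgsum : Summable (fun m : ℕ => 2*π * (|a|^(2*m) / (Nat.factorial (2*m) : ℝ))) := by
    apply Summable.mul_left
    have := (Real.summable_pow_div_factorial |a|).comp_injective
      (fun m n h => by simpa using h : Function.Injective (fun m : ℕ => 2*m))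
    exact this
  have hnormint : Summable (fun m : ℕ => ∫ θ in Set.Ioc (-π) π, ‖F m θ‖) := by
    apply Summable.of_nonneg_of_le (fun m => integral_nonneg (fun θ => norm_nonneg _)) _ hgsum
    intro m
    calc ∫ θ in Set.Ioc (-π) π, ‖F m θ‖
        ≤ ∫ _θ in Set.Ioc (-π) π, (|a|^(2*m) / (Nat.factorial (2*m) : ℝ)) := by
          apply setIntegral_mono_on (hFint m).norm (integrableOn_const measure_Ioc_lt_top.ne)
            measurableSet_Ioc
          exact fun θ _ => hbound m θ
      _ = 2*π * (|a|^(2*m) / (Nat.factorial (2*m) : ℝ)) := by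
          rw [setIntegral_const, Real.volume_real_Ioc_of_le (by linarith [pi_pos]), smul_eq_mul]
          ring_nf
  have hswap : ∑' m, (∫ θ in Set.Ioc (-π) π, F m θ)
      = ∫ θ in Set.Ioc (-π) π, Real.cos (a * Real.sin θ) := by
    rw [integral_tsum_of_summable_integral_norm hFint hnormint]
    apply setIntegral_congr_fun measurableSet_Ioc
    intro θ _
    exact (Real.cos_eq_tsum (a * Real.sin θ)).symm
  have hFval : ∀ m, (∫ θ in Set.Ioc (-π) π, F m θ)
      = 2*π * ((-1)^m * (a^2/4)^m / (Nat.factorial m : ℝ)^2) := by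
    intro m
    rw [← intervalIntegral.integral_of_le hpi]
    have : (∫ θ in (-π)..π, F m θ)
        = ((-1)^m * a^(2*m) / (Nat.factorial (2*m) : ℝ)) * ∫ θ in (-π)..π, Real.sin θ ^ (2*m) := by
      rw [← intervalIntegral.integral_const_mul]
      congr 1; funext θ
      show (-1)^m * (a * Real.sin θ)^(2*m) / (Nat.factorial (2*m) : ℝ) = _
      rw [mul_pow]; ring
    rw [this, sin_pow_integral, prod_ratio]
    have hf2 : (Nat.factorial (2*m) : ℝ) ≠ 0 := Nat.cast_ne_zero.2 (Nat.factorial_ne_zero _)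
    have hfm : (Nat.factorial m : ℝ) ≠ 0 := Nat.cast_ne_zero.2 (Nat.factorial_ne_zero _)
    have hpow : (a^2/4)^m = a^(2*m) / 4^m := by
      rw [div_pow, ← pow_mul]
    rw [hpow]
    field_simp
  rw [← intervalIntegral.integral_of_le hpi] at hswap
  rw [← hswap]
  rw [funext hFval, tsum_mul_left]
  rw [← mul_assoc]
  have : (1/(2*π)) * (2*π) = 1 := by
    field_simp
  rw [this, one_mul]

/-- The `n`-th Laguerre polynomial, `L_n(x) = Σ_{k=0}^{n} (n choose k) (−x)^k / k!`. -/
noncomputable def laguerre (n : ℕ) (x : ℝ) : ℝ :=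
  ∑ k ∈ Finset.range (n + 1), (n.choose k : ℝ) * (-x) ^ k / (Nat.factorial k : ℝ)

lemma laguerre_tendsto (x : ℝ) (hx : 0 ≤ x) :
    Tendsto (fun n : ℕ => laguerre n (x / n)) atTop
      (nhds (∑' k : ℕ, (-x)^k / (Nat.factorial k : ℝ)^2)) := by
  set f : ℕ → ℕ → ℝ := fun n k => (n.choose k : ℝ) * (-(x/n))^k / (Nat.factorial k : ℝ) with hf
  have hls : ∀ n : ℕ, laguerre n (x/n) = ∑' k, f n k := by
    intro n
    rw [laguerre, tsum_eq_sum (s := Finset.range (n+1))]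
    intro k hk
    have : n < k := by simpa using hk
    simp [hf, Nat.choose_eq_zero_of_lt this]
  have hbsum : Summable (fun k : ℕ => x^k / (Nat.factorial k : ℝ)^2) := by
    apply Summable.of_nonneg_of_le (fun k => by positivity) _ (Real.summable_pow_div_factorial x)
    intro k
    have h1 : (1:ℝ) ≤ (Nat.factorial k : ℝ) := by exact_mod_cast Nat.one_le_iff_ne_zero.2 (Nat.factorial_ne_zero k)
    have h2 : (0:ℝ) < (Nat.factorial k : ℝ) := by positivity
    rw [pow_two, div_le_div_iff₀ (by positivity) h2]
    have hxk : (0:ℝ) ≤ x^k := pow_nonneg hx k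
    exact mul_le_mul_of_nonneg_left (le_mul_of_one_le_left h2.le h1) hxk
  have hptwise : ∀ k : ℕ, Tendsto (fun n => f n k) atTop (nhds ((-x)^k / (Nat.factorial k : ℝ)^2)) := by
    intro k
    have hfk : (0:ℝ) < (Nat.factorial k : ℝ) := by positivity
    have hprod : Tendsto (fun n : ℕ => ∏ i ∈ Finset.range k, (1 - (i:ℝ)/n)) atTop (nhds 1) := by
      have := tendsto_finset_prod (Finset.range k)
        (f := fun (i : ℕ) (n : ℕ) => 1 - (i:ℝ)/n) (a := fun _ => 1)
        (fun i _ => by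
          simpa using tendsto_const_nhds.sub (tendsto_const_div_atTop_nhds_zero_nat (i:ℝ)))
      simpa using this
    have heq : ∀ᶠ n : ℕ in atTop, ((-x)^k / (Nat.factorial k : ℝ)^2) *
        (∏ i ∈ Finset.range k, (1 - (i:ℝ)/n)) = f n k := by
      filter_upwards [eventually_ge_atTop (max k 1)] with n hn
      have hnk : k ≤ n := le_trans (le_max_left _ _) hn
      have hn1 : 1 ≤ n := le_trans (le_max_right _ _) hn
      have hn0 : (0:ℝ) < n := by exact_mod_cast hn1
      have hdesc : ((n.descFactorial k : ℕ) : ℝ) = ∏ i ∈ Finset.range k, ((n:ℝ) - i) := by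
        rw [Nat.descFactorial_eq_prod_range, Nat.cast_prod]
        exact Finset.prod_congr rfl fun i hi => by
          have : i ≤ n := le_trans (Finset.mem_range.1 hi).le hnk
          push_cast [Nat.cast_sub this]; ring
      have hchoose : (n.choose k : ℝ) = (∏ i ∈ Finset.range k, ((n:ℝ) - i)) / (Nat.factorial k : ℝ) := by
        rw [← hdesc, Nat.descFactorial_eq_factorial_mul_choose]
        push_cast; field_simp
      have hprodeq : ∏ i ∈ Finset.range k, (1 - (i:ℝ)/n)
          = (∏ i ∈ Finset.range k, ((n:ℝ) - i)) / n^k := by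
        have h2 : (∏ i ∈ Finset.range k, ((n:ℝ) - i)) / (n:ℝ)^k
            = ∏ i ∈ Finset.range k, (((n:ℝ) - i)/(n:ℝ)) := by
          rw [Finset.prod_div_distrib, Finset.prod_const, Finset.card_range]
        rw [h2]
        exact Finset.prod_congr rfl fun i _ => by field_simp
      rw [hf]
      show ((-x)^k / (Nat.factorial k : ℝ)^2) * _ = (n.choose k : ℝ) * (-(x/(n:ℝ)))^k / (Nat.factorial k : ℝ)
      rw [hprodeq, hchoose]
      have hne : ((n:ℝ))^k ≠ 0 := by positivity
      have hpow : (-(x/(n:ℝ)))^k = (-x)^k / (n:ℝ)^k := by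
        rw [← neg_div, div_pow]
      rw [hpow]
      field_simp
    have := hprod.const_mul ((-x)^k / (Nat.factorial k : ℝ)^2)
    rw [mul_one] at this
    exact this.congr' heq
  have hbound : ∀ᶠ n : ℕ in atTop, ∀ k, ‖f n k‖ ≤ x^k / (Nat.factorial k : ℝ)^2 := by
    filter_upwards [eventually_ge_atTop 1] with n hn1 k
    have hn0 : (0:ℝ) < n := by exact_mod_cast hn1
    have hfk : (0:ℝ) < (Nat.factorial k : ℝ) := by positivity
    have hch : (n.choose k : ℝ) * (Nat.factorial k : ℝ) ≤ (n:ℝ)^k := by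
      have h1 : n.choose k * Nat.factorial k ≤ n^k := by
        rw [mul_comm, ← Nat.descFactorial_eq_factorial_mul_choose]
        exact Nat.descFactorial_le_pow n k
      exact_mod_cast h1
    have hnorm : ‖f n k‖ = (n.choose k : ℝ) * (x/n)^k / (Nat.factorial k : ℝ) := by
      rw [hf]
      show |(n.choose k : ℝ) * (-(x/(n:ℝ)))^k / (Nat.factorial k : ℝ)| = _
      rw [abs_div, abs_mul, abs_pow, abs_neg, abs_of_nonneg (by positivity : (0:ℝ) ≤ x/n),
        abs_of_nonneg (Nat.cast_nonneg _), abs_of_pos hfk]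
    rw [hnorm, div_pow]
    calc (n.choose k : ℝ) * (x^k/(n:ℝ)^k) / (Nat.factorial k : ℝ)
        = ((n.choose k : ℝ) * (Nat.factorial k : ℝ)) * (x^k / ((n:ℝ)^k * (Nat.factorial k : ℝ)^2)) := by
          field_simp
      _ ≤ (n:ℝ)^k * (x^k / ((n:ℝ)^k * (Nat.factorial k : ℝ)^2)) := by
          apply mul_le_mul_of_nonneg_right hch (by positivity)
      _ = x^k / (Nat.factorial k : ℝ)^2 := by
          field_simp
  have := tendsto_tsum_of_dominated_convergence hbsum hptwise hbound
  simpa only [← hls] using this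

/-- For `x ≥ 0`, `L_n(x/n) → J₀(2√x) = (1/(2π)) ∫_{−π}^{π} cos(2√x sin θ) dθ` as `n → ∞`. -/
theorem laguerre_scaled_tendsto_besselJ0 (x : ℝ) (hx : 0 ≤ x) :
    Tendsto (fun n : ℕ => laguerre n (x / n)) atTop
      (nhds ((1 / (2 * π)) *
        ∫ θ in (-π)..π, Real.cos (2 * Real.sqrt x * Real.sin θ))) := by
  have h1 : ∀ θ : ℝ, 2 * Real.sqrt x * Real.sin θ = (2 * Real.sqrt x) * Real.sin θ := fun _ => rfl
  have h2 := besselJ0_series (2 * Real.sqrt x)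
  have h4 : (2 * Real.sqrt x)^2 / 4 = x := by
    rw [mul_pow, Real.sq_sqrt hx]; ring
  rw [h4] at h2
  have h5 : ∀ m : ℕ, (-1:ℝ)^m * x^m / (Nat.factorial m : ℝ)^2
      = (-x)^m / (Nat.factorial m : ℝ)^2 := fun m => by rw [← mul_pow, neg_one_mul]
  simp_rw [h5] at h2
  rw [h2]
  exact laguerre_tendsto x hx
end

section
/- Let β' > 0, let ω : ℝ³ → ℝ be measurable with ω(k) > 0 for almost every k, and let h : ℝ³ → ℂ be measurable with ∫_{ℝ³} |h(k)|² dk < ∞ and ∫_{ℝ³} |h(k)|²/ω(k) dk < ∞. Then lim_{ε → 0⁺} ε ∫_{ℝ³} coth(β'·ε·ω(k)/2)·|h(k)|² dk = (2/β') ∫_{ℝ³} |h(k)|²/ω(k) dk, where coth(x) = cosh(x)/sinh(x). -/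
open MeasureTheory Real Filter

/-- The hyperbolic cotangent, `coth x = cosh x / sinh x`. -/
noncomputable def Real.coth (x : ℝ) : ℝ := Real.cosh x / Real.sinh x


lemma my_coth_pos {x : ℝ} (hx : 0 < x) : 0 < Real.coth x :=
  div_pos (Real.cosh_pos x) (Real.sinh_pos_iff.mpr hx)

lemma my_sinh_ge (x : ℝ) : x * Real.exp (-x) ≤ Real.sinh x := by
  rw [Real.sinh_eq]
  have hab : Real.exp x * Real.exp (-x) = 1 := by rw [← Real.exp_add]; simp
  have h2 : 1 + 2 * x ≤ Real.exp x ^ 2 := by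
    have := Real.add_one_le_exp (2 * x)
    rw [two_mul, Real.exp_add, ← sq] at this
    linarith
  have hb := (Real.exp_pos (-x)).le
  have key : Real.exp x ^ 2 * Real.exp (-x) = Real.exp x := by
    rw [sq, mul_assoc, hab, mul_one]
  nlinarith [mul_nonneg (by linarith : (0:ℝ) ≤ Real.exp x ^ 2 - 1 - 2 * x) hb]

lemma my_coth_le {x : ℝ} (hx : 0 < x) : Real.coth x ≤ 1 + 1 / x := by
  have hs := Real.sinh_pos_iff.mpr hx
  rw [Real.coth, div_le_iff₀ hs]
  have h1 := my_sinh_ge x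
  have h2 : Real.cosh x - Real.sinh x = Real.exp (-x) := Real.cosh_sub_sinh x
  have h3 : (1 + 1 / x) * Real.sinh x = Real.sinh x + Real.sinh x / x := by
    field_simp
  have h4 : Real.exp (-x) ≤ Real.sinh x / x := by
    rw [le_div_iff₀ hx]; linarith
  linarith

lemma my_tendsto_mul_coth : Tendsto (fun t => t * Real.coth t) (nhdsWithin 0 (Set.Ioi 0)) (nhds 1) := by
  have hs : Tendsto (fun t : ℝ => Real.sinh t / t) (nhdsWithin 0 {(0:ℝ)}ᶜ) (nhds 1) := by
    have hd := hasDerivAt_iff_tendsto_slope.mp (Real.hasDerivAt_sinh 0)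
    rw [Real.cosh_zero] at hd
    exact hd.congr fun t => by simp [slope_def_field, Real.sinh_zero]
  have hs' : Tendsto (fun t : ℝ => Real.sinh t / t) (nhdsWithin 0 (Set.Ioi 0)) (nhds 1) :=
    hs.mono_left (nhdsWithin_mono 0 fun x hx => ne_of_gt hx)
  have hc : Tendsto (fun t : ℝ => Real.cosh t / (Real.sinh t / t)) (nhdsWithin 0 (Set.Ioi 0)) (nhds 1) := by
    have h1 := (Real.continuous_cosh.tendsto 0).mono_left (nhdsWithin_le_nhds (s := Set.Ioi 0))
    have := h1.div hs' one_ne_zero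
    rwa [Real.cosh_zero, div_one] at this
  refine hc.congr' ?_
  filter_upwards [self_mem_nhdsWithin] with t (ht : 0 < t)
  have hst := (Real.sinh_pos_iff.mpr ht).ne'
  rw [Real.coth]
  field_simp

lemma my_coth_measurable : Measurable Real.coth :=
  Real.measurable_cosh.div Real.measurable_sinh

/-- **Classical (high-temperature) limit of the thermal characteristic-function exponent.**
If `ω > 0` a.e., `|h|²` and `|h|²/ω` are integrable on `ℝ³`, then
`ε ∫ coth(β'εω(k)/2)|h(k)|² dk → (2/β') ∫ |h(k)|²/ω(k) dk` as `ε → 0⁺`. -/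
theorem thermal_classical_limit
    (β' : ℝ) (hβ' : 0 < β')
    (ω : EuclideanSpace ℝ (Fin 3) → ℝ) (hω_meas : Measurable ω)
    (hω_pos : ∀ᵐ k : EuclideanSpace ℝ (Fin 3), 0 < ω k)
    (h : EuclideanSpace ℝ (Fin 3) → ℂ) (hh_meas : Measurable h)
    (hh2 : Integrable (fun k => ‖h k‖ ^ 2))
    (hh2ω : Integrable (fun k => ‖h k‖ ^ 2 / ω k)) :
    Tendsto
      (fun ε : ℝ => ε * ∫ k, Real.coth (β' * ε * ω k / 2) * ‖h k‖ ^ 2)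
      (nhdsWithin 0 (Set.Ioi 0))
      (nhds ((2 / β') * ∫ k, ‖h k‖ ^ 2 / ω k)) := by
  have habs : Measurable fun k => ‖h k‖ ^ 2 :=
    (continuous_norm.measurable.comp hh_meas).pow_const 2
  have key : Tendsto
      (fun ε : ℝ => ∫ k, ε * (Real.coth (β' * ε * ω k / 2) * ‖h k‖ ^ 2))
      (nhdsWithin 0 (Set.Ioi 0))
      (nhds (∫ k, (2 / β') * (‖h k‖ ^ 2 / ω k))) := by
    apply tendsto_integral_filter_of_dominated_convergence
      (bound := fun k => ‖h k‖ ^ 2 + (2 / β') * (‖h k‖ ^ 2 / ω k))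
    · filter_upwards with ε
      exact (measurable_const.mul ((my_coth_measurable.comp
        ((hω_meas.const_mul (β' * ε)).div_const 2)).mul habs)).aestronglyMeasurable
    · filter_upwards [Ioo_mem_nhdsGT_of_mem (Set.left_mem_Ico.mpr one_pos)] with ε hε
      filter_upwards [hω_pos] with k hk
      have hε0 : 0 < ε := hε.1
      have hx : 0 < β' * ε * ω k / 2 := by positivity
      have h1 : Real.coth (β' * ε * ω k / 2) ≤ 1 + 1 / (β' * ε * ω k / 2) := my_coth_le hx
      have h2 := my_coth_pos hx
      have hH : 0 ≤ ‖h k‖ ^ 2 := by positivity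
      rw [Real.norm_eq_abs, abs_of_nonneg (by positivity)]
      have heq : ε * (1 + 1 / (β' * ε * ω k / 2)) = ε + 2 / (β' * ω k) := by
        field_simp
      have h3 : ε * Real.coth (β' * ε * ω k / 2) ≤ 1 + 2 / (β' * ω k) := by
        have := mul_le_mul_of_nonneg_left h1 hε0.le
        rw [heq] at this
        linarith [hε.2]
      have h4 : (1 + 2 / (β' * ω k)) * ‖h k‖ ^ 2
          = ‖h k‖ ^ 2 + (2 / β') * (‖h k‖ ^ 2 / ω k) := by
        field_simp
      calc ε * (Real.coth (β' * ε * ω k / 2) * ‖h k‖ ^ 2)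
          = (ε * Real.coth (β' * ε * ω k / 2)) * ‖h k‖ ^ 2 := by ring
        _ ≤ (1 + 2 / (β' * ω k)) * ‖h k‖ ^ 2 := by
            exact mul_le_mul_of_nonneg_right h3 hH
        _ = _ := h4
    · exact hh2.add (hh2ω.const_mul _)
    · filter_upwards [hω_pos] with k hk
      have hg : Tendsto (fun ε : ℝ => β' * ε * ω k / 2)
          (nhdsWithin 0 (Set.Ioi 0)) (nhdsWithin 0 (Set.Ioi 0)) := by
        rw [tendsto_nhdsWithin_iff]
        constructor
        · have hcont : Continuous fun ε : ℝ => β' * ε * ω k / 2 := by continuity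
          have := (hcont.tendsto 0).mono_left (nhdsWithin_le_nhds (s := Set.Ioi 0))
          simpa using this
        · filter_upwards [self_mem_nhdsWithin] with ε (hε : 0 < ε)
          exact Set.mem_Ioi.mpr (by positivity)
      have h1 := my_tendsto_mul_coth.comp hg
      have h2 := h1.const_mul ((2 / (β' * ω k)) * ‖h k‖ ^ 2)
      have hval : (2 / (β' * ω k)) * ‖h k‖ ^ 2 * 1
          = (2 / β') * (‖h k‖ ^ 2 / ω k) := by
        field_simp
      rw [hval] at h2
      apply h2.congr'
      filter_upwards [self_mem_nhdsWithin] with ε (hε : 0 < ε)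
      show (2 / (β' * ω k)) * ‖h k‖ ^ 2 * ((fun t => t * Real.coth t) (β' * ε * ω k / 2))
          = ε * (Real.coth (β' * ε * ω k / 2) * ‖h k‖ ^ 2)
      have hb : β' * ω k ≠ 0 := by positivity
      field_simp
  have hfun : (fun ε : ℝ => ε * ∫ k, Real.coth (β' * ε * ω k / 2) * ‖h k‖ ^ 2)
      = fun ε : ℝ => ∫ k, ε * (Real.coth (β' * ε * ω k / 2) * ‖h k‖ ^ 2) := by
    funext ε
    rw [integral_const_mul]
  rw [hfun, show (2 / β') * ∫ k, ‖h k‖ ^ 2 / ω k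
      = ∫ k, (2 / β') * (‖h k‖ ^ 2 / ω k) from (integral_const_mul _ _).symm]
  exact key
end

section
/- Let ω : ℝ³ → ℝ be measurable with ω(k) > 0 for almost every k, let f, g ∈ L²(ℝ³, ℂ), let λ, ω₀ ∈ ℝ, and define for t ∈ ℝ: g_t(k) = (1 − e^{iω(k)t}) g(k)/(i ω(k)), α_t = Re ∫_{ℝ³} e^{itω(k)} · conj(f(k)) · g(k) dk, and φ(t) = (ω₀/2)·t − (λ/√2)·Re ∫_{ℝ³} conj(f(k)) · g_t(k) dk. Then the matrix-valued function U(t) = diag(e^{−iφ(t)}, e^{iφ(t)}) satisfies U(0) = I and the differential equation U'(t) = −i·((ω₀/2) + (λ/√2)·α_t)·σ_z·U(t) for all t ∈ ℝ. -/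
open MeasureTheory Complex Matrix
open scoped Matrix.Norms.L2Operator

lemma aux_abs (x : ℝ) : ‖1 - Complex.exp (I * x)‖ ≤ |x| := by
  have h1 : 1 - Complex.exp (I * x) = ((1 - Real.cos x : ℝ) : ℂ) - (Real.sin x : ℝ) * I := by
    rw [mul_comm, Complex.exp_mul_I]
    push_cast
    ring
  have h2 : ‖1 - Complex.exp (I * x)‖ = Real.sqrt (2 - 2 * Real.cos x) := by
    rw [h1, Complex.norm_def, Complex.normSq_apply]
    congr 1
    simp only [Complex.sub_re, Complex.sub_im, Complex.ofReal_re, Complex.ofReal_im,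
      Complex.mul_re, Complex.mul_im, Complex.I_re, Complex.I_im]
    nlinarith [Real.sin_sq_add_cos_sq x]
  rw [h2]
  have hkey : Real.sin (x / 2) ^ 2 = (1 - Real.cos x) / 2 := by
    have h := Real.abs_sin_half x
    have hnn : 0 ≤ (1 - Real.cos x) / 2 := by
      have := Real.cos_le_one x; linarith
    calc Real.sin (x / 2) ^ 2 = |Real.sin (x / 2)| ^ 2 := (_root_.sq_abs _).symm
    _ = Real.sqrt ((1 - Real.cos x) / 2) ^ 2 := by rw [h]
    _ = (1 - Real.cos x) / 2 := Real.sq_sqrt hnn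
  have h4 : 2 - 2 * Real.cos x ≤ x ^ 2 := by
    have hs := Real.abs_sin_le_abs (x := x / 2)
    have h5 : Real.sin (x / 2) ^ 2 ≤ (x / 2) ^ 2 := by
      rw [← _root_.sq_abs (Real.sin (x/2)), ← _root_.sq_abs (x/2)]
      exact pow_le_pow_left₀ (abs_nonneg _) hs 2
    nlinarith
  calc Real.sqrt (2 - 2 * Real.cos x) ≤ Real.sqrt (x ^ 2) := Real.sqrt_le_sqrt h4
  _ = |x| := Real.sqrt_sq_eq_abs x

/-- **Explicit solution of the quasi-classical Schrödinger equation for the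
energy-conserving spin-boson model.**  With `g_t(k) = (1−e^{iω(k)t}) g(k)/(iω(k))`,
`α_t = Re ∫ e^{itω(k)} conj(f(k)) g(k) dk` and
`φ(t) = (ω₀/2)t − (λ/√2) Re ∫ conj(f(k)) g_t(k) dk`, the diagonal unitary
`U(t) = diag(e^{−iφ(t)}, e^{iφ(t)})` satisfies `U(0) = 1` and
`U'(t) = −i((ω₀/2) + (λ/√2)α_t) σ_z U(t)`. -/
theorem energy_conserving_explicit_solution
    (ω : EuclideanSpace ℝ (Fin 3) → ℝ) (hω_meas : Measurable ω)
    (hω_pos : ∀ᵐ k : EuclideanSpace ℝ (Fin 3), 0 < ω k)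
    (f g : EuclideanSpace ℝ (Fin 3) → ℂ)
    (hf : MemLp f 2 (volume : Measure (EuclideanSpace ℝ (Fin 3))))
    (hg : MemLp g 2 (volume : Measure (EuclideanSpace ℝ (Fin 3))))
    (lam ω₀ : ℝ)
    (gt : ℝ → EuclideanSpace ℝ (Fin 3) → ℂ)
    (hgt : ∀ t k, gt t k = (1 - Complex.exp (I * (ω k : ℂ) * (t : ℂ))) * g k / (I * (ω k : ℂ)))
    (α : ℝ → ℝ)
    (hα : ∀ t, α t = (∫ k, Complex.exp (I * (t : ℂ) * (ω k : ℂ)) * (starRingEnd ℂ) (f k) * g k).re)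
    (φ : ℝ → ℝ)
    (hφ : ∀ t, φ t = ω₀ / 2 * t - lam / Real.sqrt 2 * (∫ k, (starRingEnd ℂ) (f k) * gt t k).re)
    (σz : Matrix (Fin 2) (Fin 2) ℂ) (hσz : σz = !![1, 0; 0, -1])
    (U : ℝ → Matrix (Fin 2) (Fin 2) ℂ)
    (hU : ∀ t, U t = !![Complex.exp (-I * (φ t : ℂ)), 0; 0, Complex.exp (I * (φ t : ℂ))]) :
    U 0 = 1 ∧
    ∀ t : ℝ, HasDerivAt U
      ((-(I * (((ω₀ : ℂ) / 2) + ((lam : ℂ) / (Real.sqrt 2 : ℂ)) * (α t : ℂ)))) • (σz * U t)) t := by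
  have hωC : Measurable fun k => (ω k : ℂ) := Complex.measurable_ofReal.comp hω_meas
  have hfm := hf.aestronglyMeasurable
  have hgm := hg.aestronglyMeasurable
  have hconjf : AEStronglyMeasurable (fun k => (starRingEnd ℂ) (f k)) volume :=
    Complex.continuous_conj.comp_aestronglyMeasurable hfm
  -- integrable bound
  have hbound_int : Integrable (fun k => ‖f k‖ * ‖g k‖) volume := by
    have h1 : Integrable (fun k => ‖f k‖ ^ 2) volume := hf.norm.integrable_sq
    have h2 : Integrable (fun k => ‖g k‖ ^ 2) volume := hg.norm.integrable_sq
    refine ((h1.add h2).div_const 2).mono' (hfm.norm.mul hgm.norm) ?_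
    filter_upwards with k
    rw [Real.norm_eq_abs, _root_.abs_of_nonneg (by positivity)]
    have := sq_nonneg (‖f k‖ - ‖g k‖)
    simp only [Pi.add_apply]
    nlinarith
  -- measurability of gt t
  have hgtm : ∀ t, AEStronglyMeasurable (gt t) volume := by
    intro t
    have h : AEStronglyMeasurable
        (fun k => (1 - Complex.exp (I * (ω k : ℂ) * (t : ℂ))) * g k / (I * (ω k : ℂ))) volume := by
      apply AEMeasurable.aestronglyMeasurable
      exact ((((measurable_const.sub
        (Complex.measurable_exp.comp ((hωC.const_mul I).mul_const (t : ℂ)))).aemeasurable).mul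
          hgm.aemeasurable).div (hωC.const_mul I).aemeasurable)
    exact h.congr (Filter.Eventually.of_forall fun k => (hgt t k).symm)
  have hFmeas : ∀ t, AEStronglyMeasurable (fun k => (starRingEnd ℂ) (f k) * gt t k) volume :=
    fun t => hconjf.mul (hgtm t)
  -- pointwise bound on gt
  have hgt_bound : ∀ t : ℝ, ∀ᵐ k : EuclideanSpace ℝ (Fin 3), ‖gt t k‖ ≤ |t| * ‖g k‖ := by
    intro t
    filter_upwards [hω_pos] with k hk
    have e1 : (I * (ω k : ℂ) * (t : ℂ)) = I * ((ω k * t : ℝ) : ℂ) := by push_cast; ring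
    have h2 := aux_abs (ω k * t)
    rw [← e1] at h2
    have habs : |ω k * t| = ω k * |t| := by rw [abs_mul, abs_of_pos hk]
    have hw : ‖I * (ω k : ℂ)‖ = ω k := by
      rw [norm_mul, Complex.norm_I, Complex.norm_real, one_mul, Real.norm_eq_abs, abs_of_pos hk]
    rw [hgt, norm_div, norm_mul, hw, div_le_iff₀ hk]
    calc ‖1 - Complex.exp (I * (ω k : ℂ) * (t : ℂ))‖ * ‖g k‖
        ≤ |ω k * t| * ‖g k‖ := by
          exact mul_le_mul_of_nonneg_right h2 (norm_nonneg _)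
      _ = |t| * ‖g k‖ * ω k := by rw [habs]; ring
  -- integrability of the integrand
  have hF_int : ∀ t, Integrable (fun k => (starRingEnd ℂ) (f k) * gt t k) volume := by
    intro t
    refine (hbound_int.const_mul |t|).mono' (hFmeas t) ?_
    filter_upwards [hgt_bound t] with k hk
    rw [norm_mul, RCLike.norm_conj]
    calc ‖f k‖ * ‖gt t k‖ ≤ ‖f k‖ * (|t| * ‖g k‖) :=
          mul_le_mul_of_nonneg_left hk (norm_nonneg _)
      _ = |t| * (‖f k‖ * ‖g k‖) := by ring
  -- measurability of the derivative integrand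
  have hF'meas : ∀ t : ℝ, AEStronglyMeasurable
      (fun k => -(Complex.exp (I * (t : ℂ) * (ω k : ℂ)) * (starRingEnd ℂ) (f k) * g k))
      volume := by
    intro t
    exact (((Complex.measurable_exp.comp
      (hωC.const_mul (I * (t : ℂ)))).aestronglyMeasurable.mul hconjf).mul hgm).neg
  -- derivative of the integral
  have hInt : ∀ t₀ : ℝ, HasDerivAt (fun t => ∫ k, (starRingEnd ℂ) (f k) * gt t k)
      (∫ k, -(Complex.exp (I * (t₀ : ℂ) * (ω k : ℂ)) * (starRingEnd ℂ) (f k) * g k)) t₀ := by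
    intro t₀
    refine (hasDerivAt_integral_of_dominated_loc_of_deriv_le
      (F := fun t k => (starRingEnd ℂ) (f k) * gt t k)
      (F' := fun t k => -(Complex.exp (I * (t : ℂ) * (ω k : ℂ)) * (starRingEnd ℂ) (f k) * g k))
      (bound := fun k => ‖f k‖ * ‖g k‖)
      (Metric.ball_mem_nhds t₀ zero_lt_one) (Filter.Eventually.of_forall fun t => hFmeas t) (hF_int t₀) (hF'meas t₀)
      ?_ hbound_int ?_).2
    · filter_upwards with k t _
      have hone : ‖Complex.exp (I * (t : ℂ) * (ω k : ℂ))‖ = 1 := by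
        rw [Complex.norm_exp]
        have : (I * (t : ℂ) * (ω k : ℂ)).re = 0 := by simp
        rw [this, Real.exp_zero]
      rw [norm_neg, norm_mul, norm_mul, hone, one_mul, RCLike.norm_conj]
    · filter_upwards [hω_pos] with k hk t _
      have hc : (I * (ω k : ℂ)) ≠ 0 :=
        mul_ne_zero Complex.I_ne_zero (Complex.ofReal_ne_zero.mpr hk.ne')
      have h0 : HasDerivAt (fun t : ℝ => ((t : ℂ))) 1 t := by
        exact (hasDerivAt_id t).ofReal_comp.congr_deriv (by simp)
      have h1 : HasDerivAt (fun t : ℝ => Complex.exp (I * (ω k : ℂ) * (t : ℂ)))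
          (Complex.exp (I * (ω k : ℂ) * (t : ℂ)) * (I * (ω k : ℂ))) t := by
        simpa using (h0.const_mul (I * (ω k : ℂ))).cexp
      have h2 := (((h1.const_sub 1).mul_const (g k)).div_const
        (I * (ω k : ℂ))).const_mul ((starRingEnd ℂ) (f k))
      have heq : (fun t : ℝ => (starRingEnd ℂ) (f k) *
          ((1 - Complex.exp (I * (ω k : ℂ) * (t : ℂ))) * g k / (I * (ω k : ℂ))))
          = fun t => (starRingEnd ℂ) (f k) * gt t k := by
        funext s; rw [hgt]
      rw [heq] at h2
      refine h2.congr_deriv ?_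
      have hω0 : (ω k : ℂ) ≠ 0 := Complex.ofReal_ne_zero.mpr hk.ne'
      rw [show I * (t : ℂ) * (ω k : ℂ) = I * (ω k : ℂ) * (t : ℂ) by ring]
      field_simp
  -- derivative of φ
  have hφ' : ∀ t₀ : ℝ, HasDerivAt φ (ω₀ / 2 + lam / Real.sqrt 2 * α t₀) t₀ := by
    intro t₀
    have h1 := hInt t₀
    have h2 : HasDerivAt (fun t => (∫ k, (starRingEnd ℂ) (f k) * gt t k).re) (-(α t₀)) t₀ := by
      have h3 := Complex.reCLM.hasFDerivAt.comp_hasDerivAt t₀ h1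
      have h4 : Complex.reCLM (∫ k, -(Complex.exp (I * (t₀ : ℂ) * (ω k : ℂ)) *
          (starRingEnd ℂ) (f k) * g k)) = -(α t₀) := by
        rw [integral_neg, map_neg, hα]
        rfl
      rw [h4] at h3
      exact h3
    have h3 : HasDerivAt (fun t : ℝ => ω₀ / 2 * t) (ω₀ / 2) t₀ := by
      simpa using (hasDerivAt_id t₀).const_mul (ω₀ / 2)
    have h4 := h3.sub (h2.const_mul (lam / Real.sqrt 2))
    have heqφ : (fun t => ω₀ / 2 * t - lam / Real.sqrt 2 *
        (∫ k, (starRingEnd ℂ) (f k) * gt t k).re) = φ := funext fun s => (hφ s).symm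
    change HasDerivAt (fun t => ω₀ / 2 * t - lam / Real.sqrt 2 *
        (∫ k, (starRingEnd ℂ) (f k) * gt t k).re) _ t₀ at h4
    rw [heqφ] at h4
    convert h4 using 1
    ring
  constructor
  · have hgt0 : ∀ k, gt 0 k = 0 := by
      intro k; rw [hgt]; push_cast; simp
    have hφ0 : φ 0 = 0 := by
      rw [hφ]
      simp [hgt0]
    rw [hU 0, hφ0, Matrix.one_fin_two]
    norm_num
  · intro t
    have hc := hφ' t
    have hcast : ((ω₀ / 2 + lam / Real.sqrt 2 * α t : ℝ) : ℂ)
        = (ω₀ : ℂ) / 2 + (lam : ℂ) / (Real.sqrt 2 : ℂ) * (α t : ℂ) := by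
      push_cast; ring
    have hφC : HasDerivAt (fun s => ((φ s : ℝ) : ℂ)) ((ω₀ / 2 + lam / Real.sqrt 2 * α t : ℝ) : ℂ) t :=
      hc.ofReal_comp
    have h1 : HasDerivAt (fun s => Complex.exp (-I * (φ s : ℂ)))
        (Complex.exp (-I * (φ t : ℂ)) * (-I * ((ω₀ / 2 + lam / Real.sqrt 2 * α t : ℝ) : ℂ))) t := by
      simpa [mul_comm] using (hφC.const_mul (-I)).cexp
    have h2 : HasDerivAt (fun s => Complex.exp (I * (φ s : ℂ)))
        (Complex.exp (I * (φ t : ℂ)) * (I * ((ω₀ / 2 + lam / Real.sqrt 2 * α t : ℝ) : ℂ))) t := by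
      simpa [mul_comm] using (hφC.const_mul I).cexp
    have hE := (h1.smul_const (!![1, 0; 0, 0] : Matrix (Fin 2) (Fin 2) ℂ)).add
      (h2.smul_const (!![0, 0; 0, 1] : Matrix (Fin 2) (Fin 2) ℂ))
    have hfun : (fun s => Complex.exp (-I * (φ s : ℂ)) • (!![1, 0; 0, 0] : Matrix (Fin 2) (Fin 2) ℂ)
        + Complex.exp (I * (φ s : ℂ)) • (!![0, 0; 0, 1] : Matrix (Fin 2) (Fin 2) ℂ)) = U := by
      funext s
      rw [hU s]
      ext i j
      fin_cases i <;> fin_cases j <;> simp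
    change HasDerivAt (fun s => Complex.exp (-I * (φ s : ℂ)) • (!![1, 0; 0, 0] : Matrix (Fin 2) (Fin 2) ℂ)
        + Complex.exp (I * (φ s : ℂ)) • (!![0, 0; 0, 1] : Matrix (Fin 2) (Fin 2) ℂ)) _ t at hE
    rw [hfun] at hE
    convert hE using 1
    rw [hσz, hU t, Matrix.mul_fin_two]
    ext i j
    fin_cases i <;> fin_cases j <;>
      · simp only [Fin.zero_eta, Fin.mk_one, Matrix.smul_apply, Matrix.add_apply,
          Matrix.cons_val', Matrix.cons_val_zero, Matrix.cons_val_one, Matrix.head_cons,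
          Matrix.head_fin_const, Matrix.empty_val', Matrix.cons_val_fin_one, Matrix.of_apply,
          smul_eq_mul]
        rw [hcast]
        ring
end

section
/- Let ω : ℝ³ → ℝ be measurable with ω(k) > 0 for almost every k, let g ∈ L²(ℝ³, ℂ), λ, ω₀ ∈ ℝ, and for f ∈ L²(ℝ³, ℂ) and t ∈ ℝ set g_t(k) = (1 − e^{iω(k)t}) g(k)/(i ω(k)), φ_f(t) = (ω₀/2)t − (λ/√2)·Re ∫ conj(f(k)) g_t(k) dk, and U_t(f) = diag(e^{−iφ_f(t)}, e^{iφ_f(t)}). Let μ be a Borel probability measure on L²(ℝ³, ℂ), let γ₀ be a 2×2 complex matrix, and define γ(t) = ∫ U_t(f) γ₀ U_t(f)* dμ(f) (the entrywise Bochner integral, which exists since the integrand has entries bounded by ‖γ₀‖ and depends continuously on f). Then for all t ∈ ℝ: the diagonal entries satisfy (γ(t))₁₁ = (γ₀)₁₁ and (γ(t))₂₂ = (γ₀)₂₂, and the off-diagonal entry satisfies (γ(t))₁₂ = e^{−iω₀ t} · (∫ exp(i√2·λ·Re ∫_{ℝ³} conj(f(k)) g_t(k) dk) dμ(f)) ·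 (γ₀)₁₂. -/
open MeasureTheory Complex Matrix

noncomputable instance :
    MeasurableSpace (Lp ℂ 2 (volume : Measure (EuclideanSpace ℝ (Fin 3)))) := borel _

lemma sqrt_two_aux (a b r tt : ℝ) :
    2 * (a / 2 * tt - b / Real.sqrt 2 * r) = a * tt - Real.sqrt 2 * b * r := by
  calc 2 * (a / 2 * tt - b / Real.sqrt 2 * r)
      = a * tt - 2 / Real.sqrt 2 * (b * r) := by ring
    _ = a * tt - Real.sqrt 2 * (b * r) := by rw [Real.div_sqrt]
    _ = a * tt - Real.sqrt 2 * b * r := by ring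

/-- **Quasi-classical spin dynamics of the energy-conserving spin-boson model.**
With `g_t(k) = (1−e^{iω(k)t}) g(k)/(iω(k))`, `φ_f(t) = (ω₀/2)t − (λ/√2) Re⟨f, g_t⟩`,
`U_t(f) = diag(e^{−iφ_f(t)}, e^{iφ_f(t)})` and `γ(t) = ∫ U_t(f) γ₀ U_t(f)* dμ(f)` (entrywise),
the populations are constant and the coherence is multiplied by `e^{−iω₀ t}` times the
decoherence function `∫ e^{i√2 λ Re⟨f, g_t⟩} dμ(f)`. -/
theorem quasiclassical_energy_conserving_dynamics
    (ω : EuclideanSpace ℝ (Fin 3) → ℝ) (hω_meas : Measurable ω)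
    (hω_pos : ∀ᵐ k : EuclideanSpace ℝ (Fin 3), 0 < ω k)
    (g : EuclideanSpace ℝ (Fin 3) → ℂ)
    (hg : MemLp g 2 (volume : Measure (EuclideanSpace ℝ (Fin 3))))
    (lam ω₀ : ℝ)
    (gt : ℝ → EuclideanSpace ℝ (Fin 3) → ℂ)
    (hgt : ∀ t k, gt t k = (1 - Complex.exp (I * (ω k : ℂ) * (t : ℂ))) * g k / (I * (ω k : ℂ)))
    (φ : Lp ℂ 2 (volume : Measure (EuclideanSpace ℝ (Fin 3))) → ℝ → ℝ)
    (hφ : ∀ f t, φ f t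
      = ω₀ / 2 * t - lam / Real.sqrt 2 * (∫ k, (starRingEnd ℂ) (f k) * gt t k).re)
    (U : ℝ → Lp ℂ 2 (volume : Measure (EuclideanSpace ℝ (Fin 3)))
      → Matrix (Fin 2) (Fin 2) ℂ)
    (hU : ∀ t f, U t f
      = !![Complex.exp (-I * (φ f t : ℂ)), 0; 0, Complex.exp (I * (φ f t : ℂ))])
    (μ : Measure (Lp ℂ 2 (volume : Measure (EuclideanSpace ℝ (Fin 3)))))
    [IsProbabilityMeasure μ]
    (γ₀ : Matrix (Fin 2) (Fin 2) ℂ)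
    (γ : ℝ → Matrix (Fin 2) (Fin 2) ℂ)
    (hγ : ∀ t i j, γ t i j = ∫ f, (U t f * γ₀ * (U t f)ᴴ) i j ∂μ) :
    ∀ t : ℝ,
      γ t 0 0 = γ₀ 0 0 ∧ γ t 1 1 = γ₀ 1 1 ∧
      γ t 0 1 = Complex.exp (-I * (ω₀ : ℂ) * (t : ℂ))
        * (∫ f, Complex.exp (I * (Real.sqrt 2 : ℂ) * (lam : ℂ)
            * (((∫ k, (starRingEnd ℂ) (f k) * gt t k).re : ℝ) : ℂ)) ∂μ)
        * γ₀ 0 1 := by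

  intro t
  set R : Lp ℂ 2 (volume : Measure (EuclideanSpace ℝ (Fin 3))) → ℝ :=
    fun f => (∫ k, (starRingEnd ℂ) (f k) * gt t k).re with hR
  have hinv : ∀ z : ℂ, Complex.exp (-z) * Complex.exp z = 1 := by
    intro z; rw [← Complex.exp_add, neg_add_cancel, Complex.exp_zero]
  have h00 : ∀ f, (U t f * γ₀ * (U t f)ᴴ) 0 0 = γ₀ 0 0 := by
    intro f
    simp [hU, Matrix.mul_apply, Fin.sum_univ_two, Matrix.conjTranspose_apply,
      Matrix.vecMul, dotProduct, ← Complex.exp_conj]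
    calc Complex.exp (-(I * (φ f t : ℂ))) * γ₀ 0 0 * Complex.exp (I * (φ f t : ℂ))
        = Complex.exp (-(I * (φ f t : ℂ))) * Complex.exp (I * (φ f t : ℂ)) * γ₀ 0 0 := by ring
      _ = γ₀ 0 0 := by rw [hinv, one_mul]
  have h11 : ∀ f, (U t f * γ₀ * (U t f)ᴴ) 1 1 = γ₀ 1 1 := by
    intro f
    simp [hU, Matrix.mul_apply, Fin.sum_univ_two, Matrix.conjTranspose_apply,
      Matrix.vecMul, dotProduct, ← Complex.exp_conj]
    calc Complex.exp (I * (φ f t : ℂ)) * γ₀ 1 1 * Complex.exp (-(I * (φ f t : ℂ)))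
        = Complex.exp (-(I * (φ f t : ℂ))) * Complex.exp (I * (φ f t : ℂ)) * γ₀ 1 1 := by ring
      _ = γ₀ 1 1 := by rw [hinv, one_mul]
  have h01 : ∀ f, (U t f * γ₀ * (U t f)ᴴ) 0 1
      = Complex.exp (-I * (ω₀ : ℂ) * (t : ℂ))
        * (Complex.exp (I * (Real.sqrt 2 : ℂ) * (lam : ℂ) * ((R f : ℝ) : ℂ)) * γ₀ 0 1) := by
    intro f
    have h2 : Real.sqrt 2 * Real.sqrt 2 = 2 := Real.mul_self_sqrt (by norm_num)
    have hs2 : (Real.sqrt 2 : ℝ) ≠ 0 := by positivity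
    have hφ2 : (2:ℝ) * φ f t = ω₀ * t - Real.sqrt 2 * lam * R f := by
      rw [hφ]
      exact sqrt_two_aux ω₀ lam _ t
    have key : (-(I * ((φ f t : ℝ) : ℂ))) + (-(I * ((φ f t : ℝ) : ℂ)))
        = -I * (ω₀ : ℂ) * (t : ℂ) + I * (Real.sqrt 2 : ℂ) * (lam : ℂ) * ((R f : ℝ) : ℂ) := by
      have hc := congrArg (fun x : ℝ => (x : ℂ)) hφ2
      push_cast at hc
      linear_combination (-I) * hc
    simp [hU, Matrix.mul_apply, Fin.sum_univ_two, Matrix.conjTranspose_apply,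
      Matrix.vecMul, dotProduct, ← Complex.exp_conj]
    calc Complex.exp (-(I * (φ f t : ℂ))) * γ₀ 0 1 * Complex.exp (-(I * (φ f t : ℂ)))
        = Complex.exp ((-(I * (φ f t : ℂ))) + (-(I * (φ f t : ℂ)))) * γ₀ 0 1 := by
          rw [Complex.exp_add]; ring
      _ = _ := by rw [key, Complex.exp_add]; ring
  refine ⟨?_, ?_, ?_⟩
  · rw [hγ]; simp only [h00]; simp
  · rw [hγ]; simp only [h11]; simp
  · rw [hγ]
    simp only [h01]
    rw [MeasureTheory.integral_const_mul, MeasureTheory.integral_mul_const, mul_assoc]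
    simp only [hR]
    ring_nf
end

section
/- Let G be a 2×2 complex Hermitian matrix, λ, ω₀ ∈ ℝ, H_S = (ω₀/2)·σ_z, and let α : ℝ → ℝ be continuous with ∫₀^∞ |α(t)| dt < ∞. Suppose U : ℝ → M₂(ℂ) is continuously differentiable with U(0) = I and U'(t) = −i(H_S + λ·α(t)·G)·U(t) for all t. Then the wave operator Ω₊ := lim_{t → ∞} U(t)* · exp(−it·H_S) exists as a limit in the operator norm on M₂(ℂ). -/
open MeasureTheory Complex Matrix Filter
open scoped Matrix.Norms.L2Operator

namespace WaveOpAux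

noncomputable section

/-- Conjugate transpose as a continuous ℝ-linear map on 2×2 complex matrices
(with the L2 operator norm). -/
def starCLM : Matrix (Fin 2) (Fin 2) ℂ →L[ℝ] Matrix (Fin 2) (Fin 2) ℂ :=
  LinearMap.mkContinuous
    { toFun := fun A => Aᴴ
      map_add' := fun A B => Matrix.conjTranspose_add A B
      map_smul' := fun r A => by
        ext i j
        simp [Matrix.conjTranspose_apply, star_smul] }
    1 (fun A => by
      show ‖Aᴴ‖ ≤ 1 * ‖A‖
      rw [Matrix.l2_opNorm_conjTranspose, one_mul])

@[simp] lemma starCLM_apply (A : Matrix (Fin 2) (Fin 2) ℂ) : starCLM A = Aᴴ := rfl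

instance : ContinuousStar (Matrix (Fin 2) (Fin 2) ℂ) := ⟨starCLM.continuous⟩

end

end WaveOpAux

open WaveOpAux

/-- **Existence of the wave operator `Ω₊` for the quasi-classical spin dynamics.**
If `U'(t) = −i(H_S + λ α(t) G) U(t)`, `U(0) = 1`, with `H_S = (ω₀/2)σ_z`, `G` Hermitian, `α`
continuous and `∫₀^∞ |α(t)| dt < ∞`, then `Ω₊ = lim_{t→∞} U(t)* e^{−itH_S}` exists in the
operator norm on `M₂(ℂ)`. -/
theorem wave_operator_exists
    (G : Matrix (Fin 2) (Fin 2) ℂ) (hG : G.IsHermitian)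
    (lam ω₀ : ℝ)
    (HS : Matrix (Fin 2) (Fin 2) ℂ) (hHS : HS = ((ω₀ : ℂ) / 2) • !![1, 0; 0, -1])
    (α : ℝ → ℝ) (hα : Continuous α)
    (hα_int : IntegrableOn (fun t => |α t|) (Set.Ioi (0:ℝ)))
    (U : ℝ → Matrix (Fin 2) (Fin 2) ℂ) (hU0 : U 0 = 1)
    (hU : ∀ t : ℝ, HasDerivAt U
      ((-I) • ((HS + (((lam * α t : ℝ) : ℂ)) • G) * U t)) t) :
    ∃ Ωplus : Matrix (Fin 2) (Fin 2) ℂ,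
      Tendsto (fun t : ℝ => (U t)ᴴ * NormedSpace.exp ((-(I * (t : ℂ))) • HS))
        atTop (nhds Ωplus) := by
  -- Hermiticity of `HS`
  have hHSH : HSᴴ = HS := by
    rw [hHS, Matrix.conjTranspose_smul]
    congr 1
    · simp [Complex.star_def, map_div₀, Complex.conj_ofReal]
    · ext i j
      fin_cases i <;> fin_cases j <;> simp [Matrix.conjTranspose_apply]
  set K : ℝ → Matrix (Fin 2) (Fin 2) ℂ :=
    fun t => HS + (((lam * α t : ℝ) : ℂ)) • G with hKdef
  have hKH : ∀ t, (K t)ᴴ = K t := by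
    intro t
    simp [hKdef, Matrix.conjTranspose_add, Matrix.conjTranspose_smul, hHSH, hG.eq,
      Complex.star_def, Complex.conj_ofReal]
  -- derivative of the adjoint
  have hUc : ∀ t : ℝ, HasDerivAt (fun s => (U s)ᴴ)
      ((I : ℂ) • ((U t)ᴴ * K t)) t := by
    intro t
    have h := starCLM.hasFDerivAt.comp_hasDerivAt t (hU t)
    have he : starCLM ((-I) • (K t * U t)) = (I : ℂ) • ((U t)ᴴ * K t) := by
      rw [starCLM_apply, Matrix.conjTranspose_smul, Matrix.conjTranspose_mul, hKH]
      congr 1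
      simp [Complex.star_def]
    rw [he] at h
    exact h
  -- unitarity of `U`
  have hUnit : ∀ t : ℝ, (U t)ᴴ * U t = 1 := by
    have hconst : ∀ t : ℝ, HasDerivAt (fun s => (U s)ᴴ * U s) 0 t := by
      intro t
      have h := (hUc t).mul (hU t)
      refine h.congr_deriv (Eq.symm ?_)
      rw [Matrix.smul_mul, Matrix.mul_smul, Matrix.mul_assoc, ← add_smul]
      simp
    intro t
    have h := is_const_of_deriv_eq_zero (f := fun s => (U s)ᴴ * U s)
      (fun s => (hconst s).differentiableAt) (fun s => by
        rw [(hconst s).deriv]) t 0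
    simpa [hU0] using h
  have hUUn : ∀ t : ℝ, U t * (U t)ᴴ = 1 := fun t => mul_eq_one_comm.mp (hUnit t)
  have hnormU : ∀ t : ℝ, ‖(U t)ᴴ‖ = 1 := by
    intro t
    have h2 := CStarRing.norm_star_mul_self (x := (U t)ᴴ)
    rw [Matrix.star_eq_conjTranspose, Matrix.conjTranspose_conjTranspose, hUUn t,
      CStarRing.norm_one] at h2
    rcases mul_self_eq_one_iff.mp h2.symm with h | h
    · exact h
    · nlinarith [norm_nonneg ((U t)ᴴ)]
  -- the free evolution
  set E : ℝ → Matrix (Fin 2) (Fin 2) ℂ :=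
    fun t => NormedSpace.exp ((-(I * (t : ℂ))) • HS) with hEdef
  have hsmul : ∀ t : ℝ, (-(I * (t : ℂ))) • HS = t • ((-I : ℂ) • HS) := by
    intro t
    rw [← algebraMap_smul ℂ (t : ℝ) ((-I : ℂ) • HS), Complex.coe_algebraMap, smul_smul]
    congr 1
    ring
  have hErw : E = fun u : ℝ => NormedSpace.exp (u • ((-I : ℂ) • HS)) := by
    funext u
    show NormedSpace.exp ((-(I * (u : ℂ))) • HS) = _
    rw [hsmul u]
  have hE' : ∀ t : ℝ, HasDerivAt E ((((-I : ℂ)) • HS) * E t) t := by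
    intro t
    have h := hasDerivAt_exp_smul_const' (𝕂 := ℝ) ((-I : ℂ) • HS) t
    rw [hErw]
    simpa using h
  have hEn : ∀ t : ℝ, ‖E t‖ = 1 := by
    intro t
    have hstar : star (E t) = NormedSpace.exp ((I * (t : ℂ)) • HS) := by
      show star (NormedSpace.exp ((-(I * (t : ℂ))) • HS)) = _
      rw [NormedSpace.star_exp]
      congr 1
      rw [Matrix.star_eq_conjTranspose, Matrix.conjTranspose_smul, hHSH]
      congr 1
      simp [Complex.star_def]
    have hcomm : Commute ((I * (t : ℂ)) • HS) ((-(I * (t : ℂ))) • HS) :=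
      ((Commute.refl HS).smul_left _).smul_right _
    have hmul : star (E t) * E t = 1 := by
      show star (E t) * NormedSpace.exp ((-(I * (t : ℂ))) • HS) = 1
      rw [hstar, ← Matrix.exp_add_of_commute _ _ hcomm, ← add_smul]
      simp
    have h2 := CStarRing.norm_star_mul_self (x := E t)
    rw [hmul, CStarRing.norm_one] at h2
    rcases mul_self_eq_one_iff.mp h2.symm with h | h
    · exact h
    · nlinarith [norm_nonneg (E t)]
  -- the wave-operator candidate dynamics
  set W : ℝ → Matrix (Fin 2) (Fin 2) ℂ := fun t => (U t)ᴴ * E t with hWdef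
  set F : ℝ → Matrix (Fin 2) (Fin 2) ℂ :=
    fun t => (I * ((lam * α t : ℝ) : ℂ)) • ((U t)ᴴ * (G * E t)) with hFdef
  have hW : ∀ t : ℝ, HasDerivAt W (F t) t := by
    intro t
    have h := (hUc t).mul (hE' t)
    refine h.congr_deriv (Eq.symm ?_)
    rw [hFdef, hKdef]
    simp only [Matrix.mul_add, Matrix.add_mul, Matrix.smul_mul, Matrix.mul_smul,
      Matrix.mul_assoc, smul_add, smul_smul]
    module
  -- continuity
  have hUcont : Continuous U := continuous_iff_continuousAt.mpr fun t => (hU t).continuousAt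
  have hEcont : Continuous E := continuous_iff_continuousAt.mpr fun t => (hE' t).continuousAt
  have hUHcont : Continuous fun t => (U t)ᴴ := by
    have := starCLM.continuous.comp hUcont
    exact this
  have hFcont : Continuous F := by
    rw [hFdef]
    exact (continuous_const.mul (Complex.continuous_ofReal.comp
      (continuous_const.mul hα))).smul (hUHcont.mul (continuous_const.mul hEcont))
  -- integrability of the derivative
  have hbound : ∀ t : ℝ, ‖F t‖ ≤ (|lam| * ‖G‖) * |α t| := by
    intro t
    have h1 : ‖F t‖ = (|lam| * |α t|) * ‖(U t)ᴴ * (G * E t)‖ := by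
      rw [hFdef]
      simp [norm_smul, _root_.map_mul, Complex.norm_I, abs_mul,
        Complex.norm_real]
    rw [h1]
    have h2 : ‖(U t)ᴴ * (G * E t)‖ ≤ ‖(U t)ᴴ‖ * (‖G‖ * ‖E t‖) :=
      (norm_mul_le _ _).trans (by gcongr; exact norm_mul_le _ _)
    rw [hnormU t, hEn t] at h2
    calc (|lam| * |α t|) * ‖(U t)ᴴ * (G * E t)‖
        ≤ (|lam| * |α t|) * (1 * (‖G‖ * 1)) := by
          gcongr
      _ = (|lam| * ‖G‖) * |α t| := by ring
  have hFint : IntegrableOn F (Set.Ioi (0:ℝ)) := by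
    refine Integrable.mono' (hα_int.const_mul (|lam| * ‖G‖))
      (hFcont.aestronglyMeasurable.restrict) ?_
    filter_upwards with t using hbound t
  -- fundamental theorem of calculus
  have key : ∀ t : ℝ, W t = W 0 + ∫ s in (0:ℝ)..t, F s := by
    intro t
    have h := intervalIntegral.integral_eq_sub_of_hasDerivAt (f := W) (f' := F)
      (a := (0:ℝ)) (b := t) (fun s _ => hW s) (hFcont.intervalIntegrable 0 t)
    rw [h]
    abel
  have hlim := intervalIntegral_tendsto_integral_Ioi (0:ℝ) hFint tendsto_id
  refine ⟨W 0 + ∫ s in Set.Ioi (0:ℝ), F s, ?_⟩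
  exact (tendsto_const_nhds.add hlim).congr fun t => (key t).symm
end

section
/- Let G be a 2×2 complex Hermitian matrix, λ, ω₀ ∈ ℝ, H_S = (ω₀/2)·σ_z, and let α : ℝ → ℝ be continuous with ∫₀^∞ |α(t)| dt < ∞ and |λ|·‖G‖·∫₀^∞ |α(t)| dt < 1 (operator norm). Suppose U : ℝ → M₂(ℂ) is continuously differentiable with U(0) = I and U'(t) = −i(H_S + λ·α(t)·G)·U(t) for all t. Then the wave operator Ω₊ = lim_{t → ∞} U(t)* · exp(−it·H_S) exists and is an invertible matrix. -/
open MeasureTheory Complex Matrix Filter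
open scoped Matrix.Norms.L2Operator

/-- **Existence and invertibility of the wave operator `Ω₊`.**
If `U'(t) = −i(H_S + λ α(t) G) U(t)`, `U(0) = 1`, with `H_S = (ω₀/2)σ_z`, `G` Hermitian, `α`
continuous, `∫₀^∞ |α(t)| dt < ∞` and `|λ| ‖G‖ ∫₀^∞ |α(t)| dt < 1` (operator norm), then
`Ω₊ = lim_{t→∞} U(t)* e^{−itH_S}` exists in operator norm and is invertible. -/
theorem wave_operator_exists_and_invertible
    (G : Matrix (Fin 2) (Fin 2) ℂ) (hG : G.IsHermitian)
    (lam ω₀ : ℝ)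
    (HS : Matrix (Fin 2) (Fin 2) ℂ) (hHS : HS = ((ω₀ : ℂ) / 2) • !![1, 0; 0, -1])
    (α : ℝ → ℝ) (hα : Continuous α)
    (hα_int : IntegrableOn (fun t => |α t|) (Set.Ioi (0:ℝ)))
    (hsmall : |lam| * ‖G‖ * (∫ t in Set.Ioi (0:ℝ), |α t|) < 1)
    (U : ℝ → Matrix (Fin 2) (Fin 2) ℂ) (hU0 : U 0 = 1)
    (hU : ∀ t : ℝ, HasDerivAt U
      ((-I) • ((HS + (((lam * α t : ℝ) : ℂ)) • G) * U t)) t) :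
    ∃ Ωplus : Matrix (Fin 2) (Fin 2) ℂ,
      Tendsto (fun t : ℝ => (U t)ᴴ * NormedSpace.exp ((-(I * (t : ℂ))) • HS))
        atTop (nhds Ωplus) ∧ IsUnit Ωplus := by
  -- notation
  set c : ℝ → ℂ := fun t => ((lam * α t : ℝ) : ℂ) with hc
  set M : ℝ → Matrix (Fin 2) (Fin 2) ℂ := fun t => HS + c t • G with hM
  set B : Matrix (Fin 2) (Fin 2) ℂ := (-I) • HS with hB
  set E : ℝ → Matrix (Fin 2) (Fin 2) ℂ := fun t => NormedSpace.exp (t • B) with hE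
  -- HS is Hermitian
  have hHSh : HSᴴ = HS := by
    subst hHS
    ext i j
    fin_cases i <;> fin_cases j <;>
      simp [Matrix.conjTranspose_apply, Complex.ext_iff]
  have hMh : ∀ t, (M t)ᴴ = M t := by
    intro t
    simp only [hM, Matrix.conjTranspose_add, hHSh, Matrix.conjTranspose_smul, hG.eq]
    congr 1
    rw [show star (c t) = c t by simp [hc, Complex.ext_iff]]
  -- derivative of conjTranspose of U
  have hUc : ∀ t, HasDerivAt (fun s => (U s)ᴴ) (I • ((U t)ᴴ * M t)) t := by
    intro t
    have h2 : star ((-I : ℂ) • (M t * U t)) = I • ((U t)ᴴ * M t) := by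
      rw [star_smul, StarMul.star_mul]
      simp only [star_neg, Complex.star_def, Complex.conj_I, neg_neg]
      rw [show star (M t) = M t from hMh t]
      rfl
    have h3 := (hU t).star
    rw [h2] at h3
    exact h3
  -- U is unitary at all times
  have hP : ∀ t, (U t)ᴴ * U t = 1 := by
    have hder : ∀ t, HasDerivAt (fun s => (U s)ᴴ * U s) 0 t := by
      intro t
      have h := (hUc t).fun_mul (hU t)
      convert h using 1
      iterate 3 (with_reducible_and_instances rfl)
      simp only [smul_mul_assoc, mul_smul_comm, neg_smul, mul_neg, mul_assoc]
      abel
    have hconst : ∀ t : ℝ, (U t)ᴴ * U t = (U 0)ᴴ * U 0 := by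
      intro t
      exact is_const_of_deriv_eq_zero (fun s => (hder s).differentiableAt)
        (fun s => (hder s).deriv) t 0
    intro t
    rw [hconst t, hU0]
    simp
  have hUu : ∀ t, U t ∈ unitary (Matrix (Fin 2) (Fin 2) ℂ) := by
    intro t
    rw [Unitary.mem_iff]
    exact ⟨hP t, mul_eq_one_comm.mp (hP t)⟩
  have hUnorm : ∀ t, ‖(U t)ᴴ‖ = 1 := by
    intro t
    rw [Matrix.l2_opNorm_conjTranspose]
    exact CStarRing.norm_coe_unitary (⟨U t, hUu t⟩ : unitary _)
  -- E is unitary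
  have hBneg : ∀ t : ℝ, (t • B)ᴴ = -(t • B) := by
    intro t
    rw [Matrix.conjTranspose_smul, hB, Matrix.conjTranspose_smul, hHSh]
    simp [smul_smul]
  have hEunit : ∀ t : ℝ, (E t)ᴴ * E t = 1 := by
    intro t
    show (NormedSpace.exp (t • B))ᴴ * NormedSpace.exp (t • B) = 1
    rw [← Matrix.exp_conjTranspose, hBneg t,
      ← Matrix.exp_add_of_commute (-(t • B)) (t • B) (Commute.refl (t • B)).neg_left]
    simp
  have hEnorm : ∀ t, ‖E t‖ = 1 := by
    intro t
    have : E t ∈ unitary (Matrix (Fin 2) (Fin 2) ℂ) := by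
      rw [Unitary.mem_iff]
      exact ⟨hEunit t, mul_eq_one_comm.mp (hEunit t)⟩
    exact CStarRing.norm_coe_unitary (⟨E t, this⟩ : unitary _)
  -- derivative of E
  have hE' : ∀ t : ℝ, HasDerivAt E (E t * B) t := by
    intro t
    have := hasDerivAt_exp_smul_const (𝕂 := ℝ) B t
    simpa [hE] using this
  -- HS commutes with E t
  have hcomm : ∀ t : ℝ, HS * E t = E t * HS := by
    intro t
    have h1 : Commute HS (t • B) := ((Commute.refl HS).smul_right (-I)).smul_right t
    exact (h1.exp_right)
  -- the derivative of W
  set f : ℝ → Matrix (Fin 2) (Fin 2) ℂ := fun t => (I * c t) • ((U t)ᴴ * (G * E t)) with hf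
  have hW' : ∀ t : ℝ, HasDerivAt (fun s => (U s)ᴴ * E s) (f t) t := by
    intro t
    have h := (hUc t).fun_mul (hE' t)
    convert h using 1
    iterate 3 (with_reducible_and_instances rfl)
    simp only [hf, hM, hB, smul_mul_assoc, mul_smul_comm, neg_smul, mul_neg, mul_add, add_mul,
      smul_smul, smul_add, mul_assoc, ← hcomm t]
    abel
  -- continuity of pieces
  have hUcont : Continuous U := by
    rw [continuous_iff_continuousAt]; exact fun t => (hU t).continuousAt
  have hEcont : Continuous E := by
    rw [continuous_iff_continuousAt]; exact fun t => (hE' t).continuousAt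
  have hfcont : Continuous f := by
    apply Continuous.fun_smul
    · exact continuous_const.mul (Complex.continuous_ofReal.comp (continuous_const.mul hα))
    · exact (hUcont.matrix_conjTranspose).mul (continuous_const.mul hEcont)
  -- norm bound on f
  have hfbound : ∀ t, ‖f t‖ ≤ |lam| * ‖G‖ * |α t| := by
    intro t
    rw [hf]
    calc ‖(I * c t) • ((U t)ᴴ * (G * E t))‖
        = ‖I * c t‖ * ‖(U t)ᴴ * (G * E t)‖ := norm_smul _ _
      _ ≤ (|lam| * |α t|) * (‖(U t)ᴴ‖ * (‖G‖ * ‖E t‖)) := by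
          apply mul_le_mul
          · rw [norm_mul, Complex.norm_I, one_mul, hc, Complex.norm_real]
            simp [abs_mul]
          · exact le_trans (norm_mul_le _ _)
              (mul_le_mul_of_nonneg_left (norm_mul_le _ _) (norm_nonneg _))
          · exact norm_nonneg _
          · positivity
      _ = |lam| * ‖G‖ * |α t| := by rw [hUnorm, hEnorm]; ring
  -- integrability of f on Ioi 0
  have hfint : IntegrableOn f (Set.Ioi (0:ℝ)) := by
    apply Integrable.mono' (hα_int.const_mul (|lam| * ‖G‖))
    · exact hfcont.aestronglyMeasurable
    · filter_upwards with t using by simpa [mul_assoc] using hfbound t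
  -- FTC: W t = 1 + ∫ 0..t f
  have hW0 : (U 0)ᴴ * E 0 = 1 := by
    rw [hU0, hE]
    simp
  have hFTC : ∀ t : ℝ, (U t)ᴴ * E t = 1 + ∫ s in (0:ℝ)..t, f s := by
    intro t
    have h4 := intervalIntegral.integral_eq_sub_of_hasDerivAt (f := fun s => (U s)ᴴ * E s)
      (f' := f) (a := 0) (b := t) (fun s _ => hW' s) (hfcont.intervalIntegrable 0 t)
    rw [h4, hW0]
    abel
  -- the limit
  set J : Matrix (Fin 2) (Fin 2) ℂ := ∫ s in Set.Ioi (0:ℝ), f s with hJ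
  refine ⟨1 + J, ?_, ?_⟩
  · have htend : Tendsto (fun t : ℝ => ∫ s in (0:ℝ)..t, f s) atTop (nhds J) :=
      intervalIntegral_tendsto_integral_Ioi 0 hfint tendsto_id
    have : Tendsto (fun t : ℝ => 1 + ∫ s in (0:ℝ)..t, f s) atTop (nhds (1 + J)) :=
      htend.const_add 1
    apply this.congr
    intro t
    rw [← hFTC t]
    have harg : (-(I * (t : ℂ))) • HS = t • B := by
      rw [hB]
      ext i j
      simp [Matrix.smul_apply, Complex.real_smul]
      ring
    rw [harg]
  · -- invertibility
    have hJnorm : ‖J‖ < 1 := by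
      calc ‖J‖ ≤ ∫ s in Set.Ioi (0:ℝ), |lam| * ‖G‖ * |α s| := by
            apply norm_integral_le_of_norm_le (hα_int.const_mul (|lam| * ‖G‖))
            filter_upwards with s using hfbound s
        _ = |lam| * ‖G‖ * ∫ s in Set.Ioi (0:ℝ), |α s| := by
            rw [← integral_const_mul]
        _ < 1 := hsmall
    have hu : IsUnit (1 - (-J)) := (Units.oneSub (-J) (by simpa using hJnorm)).isUnit
    simpa using hu
end
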